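/- arXiv:1603.03361 — 8 statements merged into one kernel-verified Lean document; each statement's English description precedes it below -/
import Mathlib

section
/- Let κ be an infinite cardinal and X ⊆ [ℕ]^∞ a set with |X| ≥ κ. The set X is κ-unbounded (every ≤-bounded subset of X has cardinality < κ) if and only if the set X ∪ Fin is κ-concentrated on Fin, i.e., |(X ∪ Fin) \ U| < κ for every open set U ⊆ 𝒫(ℕ) containing Fin. -/
open Set Cardinal Filter

/-- The increasing enumeration of a set of naturals (meaningful when the set is infinite). -/
noncomputable def enum (a : Set ℕ) : ℕ → ℕ := Nat.nth (· ∈ a)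

/-- `a ⊎ b = {2k : k ∈ a} ∪ {2k+1 : k ∈ b}`. -/
def usum (a b : Set ℕ) : Set ℕ := (fun k => 2 * k) '' a ∪ (fun k => 2 * k + 1) '' b

/-- The point of the Cantor space `2 ^ ℕ` corresponding to a set of naturals. -/
noncomputable def toCantor (a : Set ℕ) : ℕ → Bool := by
  classical exact fun n => if n ∈ a then true else false

lemma toCantor_eq {a : Set ℕ} {i : ℕ} : toCantor a i = true ↔ i ∈ a := by
  classical simp [toCantor]

lemma cylOpen (x : ℕ → Bool) (k : ℕ) : IsOpen {y : ℕ → Bool | ∀ i < k, y i = x i} := by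
  have : {y : ℕ → Bool | ∀ i < k, y i = x i}
      = ⋂ i ∈ Finset.range k, (fun y : ℕ → Bool => y i) ⁻¹' {x i} := by
    ext y; simp [Finset.mem_range]
  rw [this]
  exact isOpen_biInter_finset fun i _ =>
    (continuous_apply i).isOpen_preimage _ (isOpen_discrete _)

lemma openOfDep (V : Set (ℕ → Bool)) (k : ℕ)
    (h : ∀ x ∈ V, ∀ y : ℕ → Bool, (∀ i < k, y i = x i) → y ∈ V) : IsOpen V := by
  have hV : V = ⋃ x ∈ V, {y : ℕ → Bool | ∀ i < k, y i = x i} := by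
    apply Set.Subset.antisymm
    · intro x hx; exact Set.mem_biUnion hx (fun i _ => rfl)
    · intro y hy
      obtain ⟨x, hx, hcyl⟩ := Set.mem_iUnion₂.1 hy
      exact h x hx y hcyl
  rw [hV]; exact isOpen_biUnion fun x _ => cylOpen x k

lemma existsCyl {U : Set (ℕ → Bool)} (hU : IsOpen U) {x : ℕ → Bool} (hx : x ∈ U) :
    ∃ k, ∀ y : ℕ → Bool, (∀ i < k, y i = x i) → y ∈ U := by
  obtain ⟨I, u, hu, hsub⟩ := isOpen_pi_iff.1 hU x hx
  refine ⟨I.sup id + 1, fun y hy => hsub ?_⟩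
  intro i hi
  have : y i = x i := hy i (Nat.lt_succ_of_le (Finset.le_sup (f := id) hi))
  rw [this]; exact (hu i hi).2

lemma count_range_sm {f : ℕ → ℕ} (hf : StrictMono f) (n : ℕ)
    [DecidablePred (· ∈ Set.range f)] : Nat.count (· ∈ Set.range f) (f n) = n := by
  rw [Nat.count_eq_card_filter_range]
  have : {x ∈ Finset.range (f n) | x ∈ Set.range f} = (Finset.range n).image f := by
    ext i
    simp only [Finset.mem_filter, Finset.mem_range, Set.mem_range, Finset.mem_image]
    constructor
    · rintro ⟨hi, m, rfl⟩; exact ⟨m, hf.lt_iff_lt.1 hi, rfl⟩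
    · rintro ⟨m, hm, rfl⟩; exact ⟨hf hm, m, rfl⟩
  rw [this, Finset.card_image_of_injective _ hf.injective, Finset.card_range]

lemma nth_range_sm {f : ℕ → ℕ} (hf : StrictMono f) (n : ℕ) :
    Nat.nth (· ∈ Set.range f) n = f n := by
  classical
  have h := Nat.nth_count (p := (· ∈ Set.range f)) (n := f n) ⟨n, rfl⟩
  rwa [count_range_sm hf] at h

lemma lt_count_of_nth_lt {p : ℕ → Prop} [DecidablePred p] (hp : (setOf p).Infinite)
    {k n : ℕ} (h : Nat.nth p k < n) : k < Nat.count p n := by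
  have h1 : Nat.count p (Nat.nth p k + 1) = k + 1 := by
    rw [Nat.count_succ, Nat.count_nth_of_infinite hp, if_pos (Nat.nth_mem_of_infinite hp k)]
  calc k < k + 1 := Nat.lt_succ_self k
    _ = Nat.count p (Nat.nth p k + 1) := h1.symm
    _ ≤ Nat.count p n := Nat.count_monotone p h

theorem stmt4 (κ : Cardinal) (hκ : ℵ₀ ≤ κ) (X : Set (Set ℕ)) (hX : ∀ x ∈ X, x.Infinite)
    (hcard : κ ≤ #X) :
    (∀ Y ⊆ X, (∃ b : Set ℕ, b.Infinite ∧ ∀ y ∈ Y, ∀ n, enum y n ≤ enum b n) → #Y < κ) ↔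
    (∀ U : Set (ℕ → Bool), IsOpen U → (∀ s : Set ℕ, s.Finite → toCantor s ∈ U) →
      #{a : Set ℕ | a ∈ X ∪ {s | s.Finite} ∧ toCantor a ∉ U} < κ) := by
  classical
  constructor
  · -- unbounded → concentrated
    intro h U hU hFin
    set Z : Set (Set ℕ) := {a : Set ℕ | a ∈ X ∪ {s | s.Finite} ∧ toCantor a ∉ U} with hZdef
    have hZX : Z ⊆ X := by
      rintro a ⟨ha | ha, hna⟩
      · exact ha
      · exact absurd (hFin a ha) hna
    -- choose cylinder lengths for finite sets
    have hFex : ∀ s : Finset ℕ, ∃ k, ∀ y : ℕ → Bool,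
        (∀ i < k, y i = toCantor (↑s) i) → y ∈ U :=
      fun s => existsCyl hU (hFin _ s.finite_toSet)
    set F : Finset ℕ → ℕ := fun s => (hFex s).choose with hFdef
    have hF : ∀ s : Finset ℕ, ∀ y : ℕ → Bool,
        (∀ i < F s, y i = toCantor (↑s) i) → y ∈ U := fun s => (hFex s).choose_spec
    set m : ℕ → ℕ := fun n =>
      Nat.rec 0 (fun _ mn => max mn (((Finset.range mn).powerset).sup F) + 1) n with hmdef
    have hmsucc : ∀ n, m (n + 1) = max (m n) (((Finset.range (m n)).powerset).sup F) + 1 :=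
      fun n => rfl
    have hmlt : ∀ n, m n < m (n + 1) := fun n => by
      rw [hmsucc]; exact Nat.lt_succ_of_le (le_max_left _ _)
    have hFle : ∀ n, ∀ s : Finset ℕ, s ⊆ Finset.range (m n) → F s ≤ m (n + 1) := by
      intro n s hs
      rw [hmsucc]
      exact le_trans (le_trans (Finset.le_sup (Finset.mem_powerset.2 hs)) (le_max_right _ _))
        (Nat.le_succ _)
    have key : ∀ a ∈ Z, ∀ n, Nat.nth (· ∈ a) n < m (n + 1) := by
      intro a haZ
      have hna : toCantor a ∉ U := haZ.2
      have step : ∀ n, ∃ j, j ∈ a ∧ m n ≤ j ∧ j < m (n + 1) := by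
        intro n
        by_contra hcon
        push_neg at hcon
        set s : Finset ℕ := {i ∈ Finset.range (m n) | i ∈ a} with hsdef
        apply hna
        apply hF s (toCantor a)
        intro i hi
        have hiU : i < m (n + 1) := lt_of_lt_of_le hi (hFle n s (Finset.filter_subset _ _))
        have hmem : i ∈ a ↔ i ∈ (↑s : Set ℕ) := by
          simp only [hsdef, Finset.coe_filter, Finset.mem_range, Set.mem_setOf_eq]
          constructor
          · intro hia
            refine ⟨?_, hia⟩
            by_contra hge
            push_neg at hge
            exact absurd hiU (not_lt.2 (hcon i hia hge))
          · exact fun h => h.2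
        simp only [toCantor]
        by_cases hia : i ∈ a
        · rw [if_pos hia, if_pos (hmem.1 hia)]
        · rw [if_neg hia, if_neg (fun h => hia (hmem.2 h))]
      have mono : ∀ n, Nat.count (· ∈ a) (m n) < Nat.count (· ∈ a) (m (n + 1)) := by
        intro n
        obtain ⟨j, hja, hj1, hj2⟩ := step n
        calc Nat.count (· ∈ a) (m n) ≤ Nat.count (· ∈ a) j := Nat.count_monotone _ hj1
          _ < Nat.count (· ∈ a) (j + 1) := by
              rw [Nat.count_succ, if_pos hja]; exact Nat.lt_succ_self _
          _ ≤ Nat.count (· ∈ a) (m (n + 1)) := Nat.count_monotone _ hj2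
      have hcount : ∀ n, n < Nat.count (· ∈ a) (m (n + 1)) := by
        intro n
        induction n with
        | zero =>
            have := mono 0
            simpa [hmdef] using this
        | succ k ih => exact lt_of_le_of_lt (Nat.succ_le_of_lt ih) (mono (k + 1))
      exact fun n => Nat.nth_lt_of_lt_count (hcount n)
    -- the bound
    have hsm : StrictMono (fun n => m (n + 1)) :=
      strictMono_nat_of_lt_succ fun n => hmlt (n + 1)
    refine h Z hZX ⟨Set.range (fun n => m (n + 1)),
      Set.infinite_range_of_injective hsm.injective, ?_⟩
    intro y hy n
    show Nat.nth (· ∈ y) n ≤ Nat.nth (· ∈ Set.range fun n => m (n + 1)) n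
    rw [nth_range_sm hsm]
    exact le_of_lt (key y hy n)
  · -- concentrated → unbounded
    intro h Y hYX ⟨b, hbinf, hble⟩
    set V : ℕ → Set (ℕ → Bool) := fun n =>
      {x | ({i ∈ Finset.range (Nat.nth (· ∈ b) n + 1) | x i = true}).card ≤ n} with hVdef
    set U : Set (ℕ → Bool) := ⋃ n, V n with hUdef
    have hUopen : IsOpen U := by
      refine isOpen_iUnion fun n => openOfDep (V n) (Nat.nth (· ∈ b) n + 1) ?_
      intro x hx y hxy
      show ({i ∈ Finset.range (Nat.nth (· ∈ b) n + 1) | y i = true}).card ≤ n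
      have : {i ∈ Finset.range (Nat.nth (· ∈ b) n + 1) | y i = true}
          = {i ∈ Finset.range (Nat.nth (· ∈ b) n + 1) | x i = true} := by
        apply Finset.filter_congr
        intro i hi
        rw [hxy i (Finset.mem_range.1 hi)]
      rw [this]; exact hx
    have hFinU : ∀ s : Set ℕ, s.Finite → toCantor s ∈ U := by
      intro s hs
      refine Set.mem_iUnion.2 ⟨hs.toFinset.card, ?_⟩
      show ({i ∈ Finset.range _ | toCantor s i = true}).card ≤ hs.toFinset.card
      apply Finset.card_le_card
      intro i hi
      simp only [Finset.mem_filter] at hi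
      exact hs.mem_toFinset.2 (toCantor_eq.1 hi.2)
    have hYsub : Y ⊆ {a : Set ℕ | a ∈ X ∪ {s | s.Finite} ∧ toCantor a ∉ U} := by
      intro y hy
      have hyX : y ∈ X := hYX hy
      have hyinf : ({i | i ∈ y}).Infinite := by
        rw [Set.setOf_mem_eq]; exact hX y hyX
      refine ⟨Or.inl hyX, ?_⟩
      intro hyU
      obtain ⟨n, hn⟩ := Set.mem_iUnion.1 hyU
      have hcard : ({i ∈ Finset.range (Nat.nth (· ∈ b) n + 1) | toCantor y i = true}).card ≤ n := hn
      have heq : {i ∈ Finset.range (Nat.nth (· ∈ b) n + 1) | toCantor y i = true}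
          = {i ∈ Finset.range (Nat.nth (· ∈ b) n + 1) | i ∈ y} := by
        apply Finset.filter_congr
        intro i _
        simp [toCantor_eq]
      have hlt : Nat.nth (· ∈ y) n < Nat.nth (· ∈ b) n + 1 :=
        Nat.lt_succ_of_le (hble y hy n)
      have := lt_count_of_nth_lt hyinf hlt
      rw [Nat.count_eq_card_filter_range, ← heq] at this
      exact absurd hcard (not_le.2 this)
    exact lt_of_le_of_lt (Cardinal.mk_le_mk_of_subset hYsub) (h U hUopen hFinU)
end

section
/- There exists a 𝔡-unbounded subset of [ℕ]^∞, where 𝔡 is the dominating number: there is a set X ⊆ [ℕ]^∞ of cardinality 𝔡 such that every ≤-bounded subset of X has cardinality less than 𝔡. -/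
open Set Cardinal Filter

/-- A dominating family of functions. -/
def IsDominating (D : Set (ℕ → ℕ)) : Prop :=
  ∀ a : ℕ → ℕ, ∃ d ∈ D, ∀ᶠ n in Filter.atTop, a n ≤ d n

/-- The dominating number 𝔡. -/
noncomputable def dNum : Cardinal := sInf { c | ∃ D, IsDominating D ∧ c = #D }

lemma isDominating_univ : IsDominating Set.univ :=
  fun a => ⟨a, Set.mem_univ a, Filter.Eventually.of_forall fun _ => le_rfl⟩

lemma dNum_S_nonempty : { c | ∃ D, IsDominating D ∧ c = #D }.Nonempty :=
  ⟨#(Set.univ : Set (ℕ → ℕ)), Set.univ, isDominating_univ, rfl⟩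

lemma dNum_mem : ∃ D, IsDominating D ∧ dNum = #D :=
  csInf_mem dNum_S_nonempty

lemma not_dominating_of_lt {A : Set (ℕ → ℕ)} (h : #A < dNum) : ¬ IsDominating A :=
  fun hd => absurd
    (csInf_le' (show #A ∈ { c | ∃ D, IsDominating D ∧ c = #D } from ⟨A, hd, rfl⟩))
    (not_le.2 h)

lemma aleph0_le_dNum : ℵ₀ ≤ dNum := by
  apply le_csInf dNum_S_nonempty
  rintro c ⟨D, hD, rfl⟩
  by_contra hc
  push_neg at hc
  have hfin : D.Finite := Cardinal.lt_aleph0_iff_set_finite.1 hc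
  obtain ⟨d, hd, hev⟩ := hD (fun n => (hfin.toFinset.sup fun d => d n) + 1)
  obtain ⟨n, hn⟩ := hev.exists
  have h1 : (hfin.toFinset.sup fun d => d n) + 1 ≤ d n := hn
  have h2 : d n ≤ hfin.toFinset.sup fun d => d n :=
    Finset.le_sup (f := fun d => d n) (hfin.mem_toFinset.2 hd)
  exact Nat.not_succ_le_self _ (h1.trans h2)

lemma enum_range {f : ℕ → ℕ} (hf : StrictMono f) : enum (Set.range f) = f := by
  have hinf : {n | n ∈ Set.range f}.Infinite := by
    exact Set.infinite_range_of_injective hf.injective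
  have h1 : StrictMono (Nat.nth (· ∈ Set.range f)) := Nat.nth_strictMono hinf
  have h2 : Set.range (Nat.nth (· ∈ Set.range f)) = Set.range f := by
    exact Nat.range_nth_of_infinite hinf
  exact Set.range_injOn_strictMono h1 hf h2

lemma exists_core : ∃ (ι : Type) (F : ι → ℕ → ℕ), #ι = dNum ∧
    (∀ i, StrictMono (F i)) ∧ IsDominating (Set.range F) ∧
    ∀ (g : ℕ → ℕ) (T : Set ι), (∀ i ∈ T, ∀ n, F i n ≤ g n) → #T < dNum := by
  obtain ⟨D, hDdom, hDcard⟩ := dNum_mem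
  obtain ⟨r, wo, hr⟩ := Cardinal.ord_eq ↥D
  haveI := wo
  have wf : WellFounded r := IsWellFounded.wf
  have init_small : ∀ i : ↥D, #{j // r j i} < dNum := by
    intro i
    have h := Cardinal.card_typein_lt (r := r) i hr
    rw [Ordinal.card_typein] at h
    exact h.trans_le hDcard.ge
  have escape : ∀ (i : ↥D) (rec : ∀ j, r j i → ℕ → ℕ), ∃ u : ℕ → ℕ,
      ∀ j (h : r j i), ∃ᶠ n in Filter.atTop, rec j h n < u n := by
    intro i rec
    have hA : #(Set.range fun p : {j // r j i} => rec p.1 p.2) < dNum :=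
      lt_of_le_of_lt Cardinal.mk_range_le (init_small i)
    have hnd := not_dominating_of_lt hA
    rw [IsDominating] at hnd
    push_neg at hnd
    obtain ⟨a, ha⟩ := hnd
    refine ⟨a, fun j h => ?_⟩
    have h2 := ha _ ⟨⟨j, h⟩, rfl⟩
    exact h2
  choose u hu using escape
  set F : ↥D → ℕ → ℕ := WellFounded.fix wf
    (fun i rec => fun n =>
      n + ∑ m ∈ Finset.range (n + 1), ((i : ℕ → ℕ) m + u i rec m)) with hFdef
  set ui : ↥D → ℕ → ℕ := fun i => u i (fun j _ => F j) with hui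
  have hFn : ∀ (i : ↥D) (n : ℕ), F i n
      = n + ∑ m ∈ Finset.range (n + 1), ((i : ℕ → ℕ) m + ui i m) := by
    intro i n
    conv_lhs => rw [hFdef, WellFounded.fix_eq wf _ i]
  have h_ge : ∀ (i : ↥D) (n : ℕ), (i : ℕ → ℕ) n + ui i n ≤ F i n := by
    intro i n
    have h1 : (i : ℕ → ℕ) n + ui i n
        ≤ ∑ m ∈ Finset.range (n + 1), ((i : ℕ → ℕ) m + ui i m) :=
      Finset.single_le_sum (f := fun m => (i : ℕ → ℕ) m + ui i m)
        (fun m _ => Nat.zero_le _) (Finset.self_mem_range_succ n)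
    rw [hFn i n]
    omega
  have h_sm : ∀ i, StrictMono (F i) := by
    intro i
    apply strictMono_nat_of_lt_succ
    intro n
    have h1 : ∑ m ∈ Finset.range (n + 1), ((i : ℕ → ℕ) m + ui i m)
        ≤ ∑ m ∈ Finset.range (n + 1 + 1), ((i : ℕ → ℕ) m + ui i m) :=
      Finset.sum_le_sum_of_subset (Finset.range_subset_range.2 (by omega))
    rw [hFn i n, hFn i (n + 1)]
    omega
  have h_esc : ∀ (i j : ↥D), r j i → ∃ᶠ n in Filter.atTop, F j n < F i n := by
    intro i j h
    exact (hu i (fun j _ => F j) j h).mono fun n hn =>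
      lt_of_lt_of_le hn (le_trans (Nat.le_add_left _ _) (h_ge i n))
  have h_dom : IsDominating (Set.range F) := by
    intro a
    obtain ⟨d, hd, hev⟩ := hDdom a
    exact ⟨F ⟨d, hd⟩, Set.mem_range_self _, hev.mono fun n hn =>
      hn.trans (le_trans (Nat.le_add_right _ _) (h_ge ⟨d, hd⟩ n))⟩
  refine ⟨↥D, F, hDcard.symm, h_sm, h_dom, ?_⟩
  intro g T hT
  by_contra hge
  push_neg at hge
  obtain ⟨e, he, hev⟩ := h_dom (fun n => g n + 1)
  obtain ⟨γ, rfl⟩ := he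
  have hcof : ∃ i ∈ T, r γ i := by
    by_contra hno
    push_neg at hno
    have hsub : T ⊆ {i | r i γ} ∪ {γ} := by
      intro i hi
      rcases trichotomous_of r i γ with h | h | h
      · exact Or.inl h
      · exact Or.inr h
      · exact absurd h (hno i hi)
    have hle : #T ≤ #({i | r i γ} ∪ {γ} : Set ↥D) := Cardinal.mk_le_mk_of_subset hsub
    have h2 : #({i | r i γ} ∪ {γ} : Set ↥D) ≤ #{i | r i γ} + #({γ} : Set ↥D) :=
      Cardinal.mk_union_le _ _
    have h3 : #{i | r i γ} < dNum := init_small γ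
    have h4 : #({γ} : Set ↥D) = 1 := Cardinal.mk_singleton γ
    have h5 : #T < dNum := by
      refine lt_of_le_of_lt (hle.trans h2) ?_
      rw [h4]
      exact Cardinal.add_lt_of_lt aleph0_le_dNum h3
        (lt_of_lt_of_le Cardinal.one_lt_aleph0 aleph0_le_dNum)
    exact absurd hge h5.not_ge
  obtain ⟨i, hiT, hri⟩ := hcof
  obtain ⟨n, h1, h2⟩ := ((h_esc i γ hri).and_eventually hev).exists
  have := hT i hiT n
  omega

theorem stmt5 : ∃ X : Set (Set ℕ), (∀ x ∈ X, x.Infinite) ∧ #X = dNum ∧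
    ∀ Y ⊆ X, (∃ b : Set ℕ, b.Infinite ∧ ∀ y ∈ Y, ∀ n, enum y n ≤ enum b n) → #Y < dNum := by
  obtain ⟨ι, F, hcard, hsm, hdom, hunb⟩ := exists_core
  refine ⟨Set.range fun i => Set.range (F i), ?_, ?_, ?_⟩
  · rintro x ⟨i, rfl⟩
    exact Set.infinite_range_of_injective (hsm i).injective
  · apply le_antisymm
    · exact Cardinal.mk_range_le.trans_eq hcard
    · have hcomp : (fun (i : ι) => enum (Set.range (F i))) = F :=
        funext fun (i : ι) => enum_range (hsm i)
      have hEX : enum '' (Set.range fun i => Set.range (F i)) = Set.range F := by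
        rw [← Set.range_comp]
        show Set.range (fun (i : ι) => enum (Set.range (F i))) = Set.range F
        rw [hcomp]
      have h1 : dNum ≤ #(Set.range F) :=
        csInf_le' (show #(Set.range F) ∈ { c | ∃ D, IsDominating D ∧ c = #D } from
          ⟨Set.range F, hdom, rfl⟩)
      calc dNum ≤ #(Set.range F) := h1
        _ = #(enum '' (Set.range fun i => Set.range (F i))) := by rw [hEX]
        _ ≤ #(Set.range fun i => Set.range (F i)) := Cardinal.mk_image_le
  · rintro Y hYX ⟨b, _hb, hbd⟩
    set T : Set ι := (fun i => Set.range (F i)) ⁻¹' Y with hTdef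
    have hT : ∀ i ∈ T, ∀ n, F i n ≤ enum b n := by
      intro i hi n
      have := hbd _ hi n
      rwa [enum_range (hsm i)] at this
    have h1 : #T < dNum := hunb (enum b) T hT
    have h2 : #Y ≤ #T := by
      have hsub : Y ⊆ (fun i => Set.range (F i)) '' T := by
        intro y hy
        obtain ⟨i, rfl⟩ := hYX hy
        exact ⟨i, hy, rfl⟩
      exact (Cardinal.mk_le_mk_of_subset hsub).trans Cardinal.mk_image_le
    exact h2.trans_lt h1
end

section
/- Let X ⊆ [ℕ]^∞ be a family with |X| < min{𝔡, 𝔯}. Then there exists b ∈ [ℕ]^∞ with infinite complement such that for every x ∈ X, both x(n) ≤ b(n) for infinitely many n and x(n) ≤ bᶜ(n) for infinitely many n (where b and bᶜ := ℕ \ b are identified with their increasing enumerations). -/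
open Set Cardinal Filter

/-- \`r\` reaps the family \`A\`. -/
def Reaps (r : Set ℕ) (A : Set (Set ℕ)) : Prop := ∀ a ∈ A, (a ∩ r).Infinite ∧ (a \ r).Infinite

/-- The reaping number 𝔯. -/
noncomputable def rNum : Cardinal :=
  sInf { c | ∃ A : Set (Set ℕ), (∀ a ∈ A, a.Infinite) ∧
    (¬ ∃ r : Set ℕ, r.Infinite ∧ Reaps r A) ∧ c = #A }

/-! ### Auxiliary material -/

/-- Iterated "fast-growing" scale built from `g`. -/
private def itf (g : ℕ → ℕ) : ℕ → ℕ
  | 0 => 0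
  | k + 1 => g (itf g k) + itf g k + 1

private lemma itf_succ (g : ℕ → ℕ) (k : ℕ) :
    itf g (k + 1) = g (itf g k) + itf g k + 1 := rfl

private lemma itf_lt (g : ℕ → ℕ) (k : ℕ) : itf g k < itf g (k + 1) := by
  rw [itf_succ]; omega

private lemma itf_mono (g : ℕ → ℕ) : StrictMono (itf g) :=
  strictMono_nat_of_lt_succ (itf_lt g)

private lemma itf_le_self (g : ℕ → ℕ) (k : ℕ) : k ≤ itf g k :=
  (itf_mono g).le_apply

private lemma itf_interval (g : ℕ → ℕ) (n : ℕ) :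
    ∃ k, itf g k ≤ n ∧ n < itf g (k + 1) := by
  induction n with
  | zero => exact ⟨0, le_refl _, by rw [itf_succ]; omega⟩
  | succ n ih =>
    obtain ⟨k, h1, h2⟩ := ih
    by_cases hc : n + 1 < itf g (k + 1)
    · exact ⟨k, by omega, hc⟩
    · refine ⟨k + 1, by omega, ?_⟩
      have := itf_lt g (k + 1); omega

private lemma itf_apply_lt (g : ℕ → ℕ) (hg : Monotone g) {n k : ℕ}
    (hn : n < itf g (k + 1)) : g n < itf g (k + 2) := by
  have h1 : g n ≤ g (itf g (k + 1)) := hg (le_of_lt hn)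
  have h2 : itf g (k + 2) = g (itf g (k + 1)) + itf g (k + 1) + 1 := rfl
  omega

private lemma infinite_of_unbdd {S : Set ℕ} (h : ∀ N, ∃ n ∈ S, N < n) : S.Infinite :=
  Set.infinite_of_forall_exists_gt h

/-- Escaping a small family of functions, with a monotone escaping function. -/
private lemma exists_oft (X : Set (Set ℕ)) (hd : #X < dNum) (F : Set ℕ → ℕ → ℕ) :
    ∃ g : ℕ → ℕ, Monotone g ∧ ∀ x ∈ X, {n | F x n < g n}.Infinite := by
  have hnd : ¬ IsDominating (F '' X) := by
    intro hD
    have h1 : dNum ≤ #(F '' X) := csInf_le' ⟨F '' X, hD, rfl⟩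
    exact absurd (h1.trans Cardinal.mk_image_le) (not_le.2 hd)
  rw [IsDominating] at hnd; push_neg at hnd
  obtain ⟨a, ha⟩ := hnd
  refine ⟨fun n => (Finset.range (n + 1)).sup a, ?_, ?_⟩
  · intro i j hij
    exact Finset.sup_mono (Finset.range_subset_range.2 (by omega))
  · intro x hx
    have h2 := ha (F x) ⟨x, hx, rfl⟩
    have h3 : {n | F x n < a n}.Infinite := by
      rw [← Nat.frequently_atTop_iff_infinite]
      exact h2.mono fun n hn => hn
    refine h3.mono fun n hn => ?_
    exact lt_of_lt_of_le hn (Finset.le_sup (f := a) (Finset.self_mem_range_succ n))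

/-- Reaping a small family of infinite sets. -/
private lemma exists_reaper (X : Set (Set ℕ)) (hr : #X < rNum) (F : Set ℕ → Set ℕ)
    (hF : ∀ x ∈ X, (F x).Infinite) :
    ∃ s : Set ℕ, s.Infinite ∧ ∀ x ∈ X, (F x ∩ s).Infinite ∧ (F x \ s).Infinite := by
  by_contra hgoal
  have hA : ¬ ∃ r : Set ℕ, r.Infinite ∧ Reaps r (F '' X) := by
    rintro ⟨r, hri, hrr⟩
    exact hgoal ⟨r, hri, fun x hx => hrr (F x) ⟨x, hx, rfl⟩⟩
  have h1 : rNum ≤ #(F '' X) :=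
    csInf_le' ⟨F '' X, by rintro a ⟨x, hx, rfl⟩; exact hF x hx, hA, rfl⟩
  exact absurd (h1.trans Cardinal.mk_image_le) (not_le.2 hr)

private lemma count_le_of_bound {p : ℕ → Prop} [DecidablePred p] {a E : ℕ}
    (h : ∀ v, p v → v < E → v < a) : Nat.count p E ≤ a := by
  rw [Nat.count_eq_card_filter_range]
  have hsub : (Finset.range E).filter p ⊆ Finset.range a := by
    intro v hv
    simp only [Finset.mem_filter, Finset.mem_range] at hv ⊢
    exact h v hv.2 hv.1
  calc ((Finset.range E).filter p).card ≤ (Finset.range a).card := Finset.card_le_card hsub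
    _ = a := Finset.card_range a

theorem stmt8 (X : Set (Set ℕ)) (hX : ∀ x ∈ X, x.Infinite) (hcard : #X < min dNum rNum) :
    ∃ b : Set ℕ, b.Infinite ∧ bᶜ.Infinite ∧ ∀ x ∈ X,
      {n | enum x n ≤ enum b n}.Infinite ∧ {n | enum x n ≤ enum bᶜ n}.Infinite := by
  classical
  have hd : #X < dNum := hcard.trans_le (min_le_left _ _)
  have hr : #X < rNum := hcard.trans_le (min_le_right _ _)
  rcases X.eq_empty_or_nonempty with rfl | ⟨x0, hx0⟩
  · refine ⟨{v | Even v}, ?_, ?_, by simp⟩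
    · exact infinite_of_unbdd fun N => ⟨2 * N + 2, ⟨N + 1, by ring⟩, by omega⟩
    · refine infinite_of_unbdd fun N => ⟨2 * N + 1, ?_, by omega⟩
      simp [Set.mem_compl_iff, Nat.even_add_one, parity_simps]
  -- Step 1: a monotone `f` infinitely often above each `enum x`.
  obtain ⟨f, hfm, hf⟩ := exists_oft X hd fun x n => enum x n
  -- Step 2: the single-index family `C x`.
  set C : Set ℕ → Set ℕ := fun x => {k | enum x (itf f k) < itf f (k + 2)} with hC
  have hCxinf : ∀ x ∈ X, (C x).Infinite := by
    intro x hx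
    apply infinite_of_unbdd
    intro N
    obtain ⟨n, hn, hn2⟩ := (hf x hx).exists_gt (itf f (N + 1))
    obtain ⟨k, hk1, hk2⟩ := itf_interval f n
    refine ⟨k, ?_, ?_⟩
    · show enum x (itf f k) < itf f (k + 2)
      have h1 : enum x (itf f k) ≤ enum x n := Nat.nth_monotone (hX x hx) hk1
      have h2 : enum x n < f n := hn
      have h3 : f n < itf f (k + 2) := itf_apply_lt f hfm hk2
      omega
    · have h4 : itf f (N + 1) < itf f (k + 1) := lt_trans hn2 hk2
      have := (itf_mono f).lt_iff_lt.1 h4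
      omega
  -- Step 3: a monotone `G` infinitely often above the "third element of `C x`" function.
  obtain ⟨G, hGm, hG⟩ := exists_oft X hd fun x v =>
    Nat.nth (· ∈ C x) (Nat.count (· ∈ C x) v + 2) + 1
  -- Step 4: the block family `D x`.
  set D : Set ℕ → Set ℕ :=
    fun x => {i | ∃ k, k ∈ C x ∧ itf G i ≤ k ∧ k + 1 < itf G (i + 1)} with hD
  have hDinf : ∀ x ∈ X, (D x).Infinite := by
    intro x hx
    have hCx : (setOf (· ∈ C x)).Infinite := hCxinf x hx
    apply infinite_of_unbdd
    intro N
    obtain ⟨v, hv, hv2⟩ := (hG x hx).exists_gt (itf G (N + 1))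
    obtain ⟨i, hi1, hi2⟩ := itf_interval G v
    have hiN : N < i := by
      have h4 : itf G (N + 1) < itf G (i + 1) := lt_trans hv2 hi2
      have := (itf_mono G).lt_iff_lt.1 h4
      omega
    simp only [Set.mem_setOf_eq] at hv
    set j := Nat.count (· ∈ C x) v with hj
    have hvle : v ≤ Nat.nth (· ∈ C x) j := Nat.le_nth_count hCx v
    have h01 : Nat.nth (· ∈ C x) j < Nat.nth (· ∈ C x) (j + 1) :=
      (Nat.nth_lt_nth hCx).2 (by omega)
    have h12 : Nat.nth (· ∈ C x) (j + 1) < Nat.nth (· ∈ C x) (j + 2) :=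
      (Nat.nth_lt_nth hCx).2 (by omega)
    have htop : Nat.nth (· ∈ C x) (j + 2) < G v := by omega
    have hGB : G v < itf G (i + 2) := itf_apply_lt G hGm hi2
    by_cases hc : Nat.nth (· ∈ C x) (j + 1) < itf G (i + 1)
    · refine ⟨i, ⟨Nat.nth (· ∈ C x) j, Nat.nth_mem_of_infinite hCx j, by omega, by omega⟩, hiN⟩
    · have hbr : itf G (i + 1 + 1) = itf G (i + 2) := by norm_num
      refine ⟨i + 1, ⟨Nat.nth (· ∈ C x) (j + 1), Nat.nth_mem_of_infinite hCx (j + 1),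
        by omega, by omega⟩, by omega⟩
  -- Step 5: reap the block family.
  obtain ⟨s, hsinf, hreap⟩ := exists_reaper X hr D hDinf
  -- Step 6: the set `b`.
  set b : Set ℕ := {v | ∃ i, i ∈ s ∧ itf f (itf G i) ≤ v ∧ v < itf f (itf G (i + 1))} with hb
  have hbinf : b.Infinite := by
    apply infinite_of_unbdd
    intro N
    obtain ⟨i, his, hNi⟩ := hsinf.exists_gt N
    refine ⟨itf f (itf G i), ⟨i, his, le_refl _, (itf_mono f) ((itf_mono G) (lt_add_one i))⟩, ?_⟩
    have h1 := itf_le_self G i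
    have h2 := itf_le_self f (itf G i)
    omega
  have hnotb : ∀ i, i ∉ s → itf f (itf G i) ∉ b := by
    intro i his hmem
    obtain ⟨j, hjs, h1, h2⟩ := hmem
    have hj1 : j ≤ i := (itf_mono G).le_iff_le.1 ((itf_mono f).le_iff_le.1 h1)
    have hj2 : i < j + 1 := (itf_mono G).lt_iff_lt.1 ((itf_mono f).lt_iff_lt.1 h2)
    have : j = i := by omega
    exact his (this ▸ hjs)
  have hbcinf : bᶜ.Infinite := by
    apply infinite_of_unbdd
    intro N
    obtain ⟨i, hiD, hNi⟩ := (hreap x0 hx0).2.exists_gt N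
    refine ⟨itf f (itf G i), hnotb i hiD.2, ?_⟩
    have h1 := itf_le_self G i
    have h2 := itf_le_self f (itf G i)
    omega
  refine ⟨b, hbinf, hbcinf, ?_⟩
  intro x hx
  constructor
  · -- b side: use blocks outside s
    apply infinite_of_unbdd
    intro N
    obtain ⟨i, hiD, hNi⟩ := (hreap x hx).2.exists_gt N
    obtain ⟨k, hkC, hk1, hk2⟩ := hiD.1
    have hE : enum x (itf f k) < itf f (k + 2) := hkC
    refine ⟨itf f k, ?_, ?_⟩
    · show enum x (itf f k) ≤ enum b (itf f k)
      have hcount : Nat.count (· ∈ b) (enum x (itf f k)) ≤ itf f k := by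
        apply count_le_of_bound
        intro v hvb hvE
        by_contra hge
        push_neg at hge
        obtain ⟨j, hjs, h1, h2⟩ := hvb
        have hv2 : v < itf f (k + 2) := lt_trans hvE hE
        have hc1 : k < itf G (j + 1) := (itf_mono f).lt_iff_lt.1 (lt_of_le_of_lt hge h2)
        have hc2 : itf G j < k + 2 := (itf_mono f).lt_iff_lt.1 (lt_of_le_of_lt h1 hv2)
        rcases lt_trichotomy j i with hj | hj | hj
        · have : itf G (j + 1) ≤ itf G i := (itf_mono G).monotone (by omega : j + 1 ≤ i)
          omega
        · exact hiD.2 (hj ▸ hjs)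
        · have : itf G (i + 1) ≤ itf G j := (itf_mono G).monotone (by omega : i + 1 ≤ j)
          omega
      exact (Nat.count_le_iff_le_nth hbinf).1 hcount
    · have h1 := itf_le_self G i
      have h2 := itf_le_self f k
      omega
  · -- bᶜ side: use blocks inside s
    apply infinite_of_unbdd
    intro N
    obtain ⟨i, hiD, hNi⟩ := (hreap x hx).1.exists_gt N
    obtain ⟨k, hkC, hk1, hk2⟩ := hiD.1
    have hE : enum x (itf f k) < itf f (k + 2) := hkC
    refine ⟨itf f k, ?_, ?_⟩
    · show enum x (itf f k) ≤ enum bᶜ (itf f k)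
      have hcount : Nat.count (· ∈ bᶜ) (enum x (itf f k)) ≤ itf f k := by
        apply count_le_of_bound
        intro v hvb hvE
        by_contra hge
        push_neg at hge
        apply hvb
        refine ⟨i, hiD.2, ?_, ?_⟩
        · exact le_trans ((itf_mono f).monotone hk1) hge
        · have hk3 : k + 2 ≤ itf G (i + 1) := by omega
          exact lt_of_lt_of_le (lt_trans hvE hE) ((itf_mono f).monotone hk3)
      exact (Nat.count_le_iff_le_nth hbcinf).1 hcount
    · have h1 := itf_le_self G i
      have h2 := itf_le_self f k
      omega
end

section
/- If 𝔡 ≤ 𝔯, then there exists a bi-𝔡-unbounded set: a set X of infinite co-infinite subsets of ℕ of cardinality 𝔡 such that both X and {xᶜ : x ∈ X} are 𝔡-unbounded subsets of [ℕ]^∞. -/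
open Set Cardinal Filter

/-! ### Auxiliary machinery -/

namespace Stmt9Aux

/-- A strictly increasing majorant of `a`, with `n < incrMaj a n` everywhere. -/
noncomputable def incrMaj (a : ℕ → ℕ) : ℕ → ℕ := fun n => (Finset.range (n + 1)).sup a + n + 1

lemma le_incrMaj (a : ℕ → ℕ) (n : ℕ) : a n ≤ incrMaj a n := by
  have : a n ≤ (Finset.range (n + 1)).sup a :=
    Finset.le_sup (Finset.mem_range.mpr (Nat.lt_succ_self n))
  simp only [incrMaj]; omega

lemma lt_incrMaj (a : ℕ → ℕ) (n : ℕ) : n < incrMaj a n := by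
  simp only [incrMaj]; omega

lemma incrMaj_mono (a : ℕ → ℕ) : Monotone (incrMaj a) := by
  intro m n hmn
  have : (Finset.range (m + 1)).sup a ≤ (Finset.range (n + 1)).sup a :=
    Finset.sup_mono (Finset.range_subset_range.mpr (by omega))
  simp only [incrMaj]; omega

lemma incrMaj_nice (a : ℕ → ℕ) : Monotone (incrMaj a) ∧ ∀ n, n ≤ incrMaj a n :=
  ⟨incrMaj_mono a, fun n => (lt_incrMaj a n).le⟩

lemma dNum_spec : ∃ D, IsDominating D ∧ dNum = #D := by
  have hne : { c | ∃ D, IsDominating D ∧ c = #D }.Nonempty :=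
    ⟨#(Set.univ : Set (ℕ → ℕ)), Set.univ, fun a => ⟨a, trivial, Eventually.of_forall fun _ => le_rfl⟩, rfl⟩
  exact csInf_mem hne

lemma dNum_le_of_dominating {D : Set (ℕ → ℕ)} (hD : IsDominating D) : dNum ≤ #D :=
  csInf_le ⟨0, fun _ _ => Cardinal.zero_le _⟩ ⟨D, hD, rfl⟩

lemma not_dominating_of_lt {F : Set (ℕ → ℕ)} (h : #F < dNum) : ¬ IsDominating F :=
  fun hd => absurd (dNum_le_of_dominating hd) (not_le.mpr h)

lemma aleph0_lt_dNum : ℵ₀ < dNum := by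
  obtain ⟨D, hdom, hcard⟩ := dNum_spec
  rw [hcard]
  by_contra hle
  push_neg at hle
  have hcnt : D.Countable := le_aleph0_iff_set_countable.mp hle
  have hne : D.Nonempty := by
    obtain ⟨d, hd, -⟩ := hdom id
    exact ⟨d, hd⟩
  obtain ⟨f, hf⟩ := hcnt.exists_eq_range hne
  obtain ⟨d, hd, hev⟩ := hdom (fun n => (Finset.range (n + 1)).sup (fun k => f k n) + 1)
  rw [hf] at hd
  obtain ⟨k, rfl⟩ := hd
  rw [Filter.eventually_atTop] at hev
  obtain ⟨N, hN⟩ := hev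
  have h1 : (Finset.range (max N k + 1)).sup (fun j => f j (max N k)) + 1 ≤ f k (max N k) :=
    hN (max N k) (le_max_left _ _)
  have hk : k ∈ Finset.range (max N k + 1) := Finset.mem_range.mpr (by omega)
  have h2 : f k (max N k) ≤ (Finset.range (max N k + 1)).sup (fun j => f j (max N k)) :=
    Finset.le_sup (f := fun j => f j (max N k)) hk
  omega

lemma exists_reaper {𝒜 : Set (Set ℕ)} (h1 : ∀ a ∈ 𝒜, a.Infinite) (h2 : #𝒜 < rNum) :
    ∃ r : Set ℕ, r.Infinite ∧ Reaps r 𝒜 := by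
  by_contra hc
  have hmem : #𝒜 ∈ { c | ∃ A : Set (Set ℕ), (∀ a ∈ A, a.Infinite) ∧
      (¬ ∃ r : Set ℕ, r.Infinite ∧ Reaps r A) ∧ c = #A } := ⟨𝒜, h1, hc, rfl⟩
  have : rNum ≤ #𝒜 := csInf_le ⟨0, fun _ _ => Cardinal.zero_le _⟩ hmem
  exact absurd this (not_le.mpr h2)

/-- The core single-stage construction: given fewer than `𝔡` monotone "tests", produce an
infinite co-infinite set whose enumeration (and the enumeration of its complement) infinitely
often strictly exceeds each test. Uses `𝔡 ≤ 𝔯`. -/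
lemma stage (hdr : dNum ≤ rNum) (F : Set (ℕ → ℕ)) (hFc : #F < dNum)
    (hFn : ∀ g ∈ F, Monotone g ∧ ∀ n, n ≤ g n) :
    ∃ x : Set ℕ, x.Infinite ∧ xᶜ.Infinite ∧
      ∀ g ∈ F, {n | g n < enum x n}.Infinite ∧ {n | g n < enum xᶜ n}.Infinite := by
  classical
  -- a function escaping the four-fold compositions infinitely often
  set F4 : Set (ℕ → ℕ) := (fun g => fun n => g (g (g (g n)))) '' F with hF4
  have hF4c : #F4 < dNum := lt_of_le_of_lt Cardinal.mk_image_le hFc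
  have hnd : ¬ IsDominating F4 := not_dominating_of_lt hF4c
  rw [IsDominating] at hnd
  push_neg at hnd
  obtain ⟨h₀, hh₀⟩ := hnd
  have hIg : ∀ g ∈ F, {n | g (g (g (g n))) < h₀ n}.Infinite := by
    intro g hg
    have := hh₀ _ ⟨g, hg, rfl⟩
    have : ∃ᶠ n in atTop, g (g (g (g n))) < h₀ n := this.mono (fun n hn => hn)
    exact Nat.frequently_atTop_iff_infinite.mp this
  set H : ℕ → ℕ := incrMaj h₀ with hH
  set u : ℕ → ℕ := fun j => H^[j] 0 with hu
  have usucc : ∀ j, u (j + 1) = H (u j) := fun j => Function.iterate_succ_apply' H j 0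
  have uS : StrictMono u := by
    apply strictMono_nat_of_lt_succ
    intro j
    rw [usucc j]
    exact lt_incrMaj h₀ (u j)
  have u0 : u 0 = 0 := rfl
  -- locating a natural inside the orbit intervals
  have hloc : ∀ n : ℕ, ∃ j, u j ≤ n ∧ n < u (j + 1) := by
    intro n
    set j := Nat.findGreatest (fun j => u j ≤ n) n with hj
    have hP0 : (fun j => u j ≤ n) 0 := by simp [u0]
    have hspec : u j ≤ n := Nat.findGreatest_spec (P := fun j => u j ≤ n) (Nat.zero_le n) hP0
    refine ⟨j, hspec, ?_⟩
    by_contra hcon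
    push_neg at hcon
    have hjn : j + 1 ≤ n := by
      have := uS.le_apply (x := j + 1)
      omega
    exact Nat.findGreatest_is_greatest (P := fun j => u j ≤ n) (Nat.lt_succ_self j) hjn hcon
  -- the sets of good orbit indices
  set EE : (ℕ → ℕ) → Set ℕ := fun g => {j | g (g (u j)) < u (j + 1)} with hEE
  have hEEinf : ∀ g ∈ F, (EE g).Infinite := by
    intro g hg
    obtain ⟨gm, gi⟩ := hFn g hg
    by_contra hfin
    rw [Set.not_infinite] at hfin
    obtain ⟨J, hJ⟩ := hfin.bddAbove
    -- beyond J every orbit step is dominated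
    have hbad : ∀ j, J < j → u (j + 1) ≤ g (g (u j)) := by
      intro j hJj
      by_contra hcon
      push_neg at hcon
      exact absurd (hJ hcon) (by omega)
    have hchain : ∀ n, u (J + 1) ≤ n → h₀ n ≤ g (g (g (g n))) := by
      intro n hn
      obtain ⟨j, hj1, hj2⟩ := hloc n
      have hJj : J < j := by
        have : u (J + 1) < u (j + 1) := lt_of_le_of_lt hn hj2
        have := uS.lt_iff_lt.mp this
        omega
      have c1 : h₀ n ≤ H n := le_incrMaj h₀ n
      have c2 : H n ≤ H (u (j + 1)) := incrMaj_mono h₀ (le_of_lt hj2)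
      have c3 : H (u (j + 1)) = u (j + 2) := (usucc (j + 1)).symm
      have c4 : u (j + 2) ≤ g (g (u (j + 1))) := hbad (j + 1) (by omega)
      have c5 : g (g (u (j + 1))) ≤ g (g (g (g (u j)))) :=
        gm (gm (hbad j hJj))
      have c6 : g (g (g (g (u j)))) ≤ g (g (g (g n))) := gm (gm (gm (gm hj1)))
      omega
    obtain ⟨n, hnmem, hngt⟩ := (hIg g hg).exists_gt (u (J + 1))
    exact absurd (hchain n (le_of_lt hngt)) (by simpa using hnmem)
  -- reap the good index sets
  set 𝒜 : Set (Set ℕ) := insert Set.univ (EE '' F) with h𝒜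
  have h𝒜inf : ∀ a ∈ 𝒜, a.Infinite := by
    intro a ha
    rcases ha with rfl | ⟨g, hg, rfl⟩
    · exact Set.infinite_univ
    · exact hEEinf g hg
  have h𝒜card : #𝒜 < rNum := by
    have h1 : #(EE '' F) ≤ #F := Cardinal.mk_image_le
    have h2 : #(EE '' F) + 1 < dNum :=
      Cardinal.add_lt_of_lt aleph0_lt_dNum.le (lt_of_le_of_lt h1 hFc)
        (lt_trans Cardinal.one_lt_aleph0 aleph0_lt_dNum)
    have h3 : #𝒜 ≤ #(EE '' F) + 1 := by
      rw [h𝒜]; exact Cardinal.mk_insert_le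
    exact lt_of_lt_of_le (lt_of_le_of_lt h3 h2) hdr
  obtain ⟨P, hPinf, hPreap⟩ := exists_reaper h𝒜inf h𝒜card
  have hPuniv := hPreap Set.univ (Set.mem_insert _ _)
  have hPInf : (P : Set ℕ).Infinite := by
    have := hPuniv.1; rwa [Set.univ_inter] at this
  have hPcInf : (Pᶜ : Set ℕ).Infinite := by
    have := hPuniv.2; rwa [← Set.compl_eq_univ_diff] at this
  -- the set itself
  set x : Set ℕ := {m | ∃ j ∈ P, u j ≤ m ∧ m < u (j + 1)} with hx
  have hint : ∀ {j k m : ℕ}, u j ≤ m → m < u (j + 1) → u k ≤ m → m < u (k + 1) → j = k := by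
    intro j k m h1 h2 h3 h4
    have hk1 : k < j + 1 := uS.lt_iff_lt.mp (lt_of_le_of_lt h3 h2)
    have hj1 : j < k + 1 := uS.lt_iff_lt.mp (lt_of_le_of_lt h1 h4)
    omega
  have humem : ∀ j, u j ∈ x ↔ j ∈ P := by
    intro j
    constructor
    · rintro ⟨k, hk, h1, h2⟩
      have : k = j := hint h1 h2 (le_refl (u j)) (usucc j ▸ lt_incrMaj h₀ (u j))
      rwa [← this]
    · intro hj
      exact ⟨j, hj, le_refl _, usucc j ▸ lt_incrMaj h₀ (u j)⟩
  have hxinf : x.Infinite := by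
    have himg : u '' P ⊆ x := by
      rintro m ⟨j, hj, rfl⟩; exact (humem j).mpr hj
    exact (hPInf.image uS.injective.injOn).mono himg
  have hxcinf : xᶜ.Infinite := by
    have himg : u '' Pᶜ ⊆ xᶜ := by
      rintro m ⟨j, hj, rfl⟩
      exact fun hmem => hj ((humem j).mp hmem)
    exact (hPcInf.image uS.injective.injOn).mono himg
  have hxinf' : {n | n ∈ x}.Infinite := hxinf
  have hxcinf' : {n | n ∈ xᶜ}.Infinite := hxcinf
  refine ⟨x, hxinf, hxcinf, ?_⟩
  intro g hg
  obtain ⟨gm, gi⟩ := hFn g hg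
  have hgood := hPreap (EE g) (Set.mem_insert_of_mem _ ⟨g, hg, rfl⟩)
  constructor
  · -- escape for x, using good indices outside P
    have hA : (EE g \ P).Infinite := hgood.2
    have hsub : u '' (EE g \ P) ⊆ {n | g n < enum x n} := by
      rintro m ⟨j, ⟨hjE, hjP⟩, rfl⟩
      set w : ℕ := enum x (u j) with hw
      have hwx : w ∈ x := Nat.nth_mem_of_infinite hxinf' (u j)
      have hwge : u j ≤ w := (Nat.nth_strictMono hxinf').le_apply
      have hwge' : u (j + 1) ≤ w := by
        by_contra hcon
        push_neg at hcon
        obtain ⟨k, hk, h1, h2⟩ := hwx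
        have : k = j := hint h1 h2 hwge hcon
        exact hjP (this ▸ hk)
      have : g (u j) ≤ g (g (u j)) := gm (gi (u j))
      have hjE' : g (g (u j)) < u (j + 1) := hjE
      simp only [Set.mem_setOf_eq]
      omega
    exact (hA.image uS.injective.injOn).mono hsub
  · -- escape for xᶜ, using good indices inside P
    have hA : (EE g ∩ P).Infinite := hgood.1
    have hsub : u '' (EE g ∩ P) ⊆ {n | g n < enum xᶜ n} := by
      rintro m ⟨j, ⟨hjE, hjP⟩, rfl⟩
      set w : ℕ := enum xᶜ (u j) with hw
      have hwx : w ∈ xᶜ := Nat.nth_mem_of_infinite hxcinf' (u j)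
      have hwge : u j ≤ w := (Nat.nth_strictMono hxcinf').le_apply
      have hwge' : u (j + 1) ≤ w := by
        by_contra hcon
        push_neg at hcon
        exact hwx ⟨j, hjP, hwge, hcon⟩
      have : g (u j) ≤ g (g (u j)) := gm (gi (u j))
      have hjE' : g (g (u j)) < u (j + 1) := hjE
      simp only [Set.mem_setOf_eq]
      omega
    exact (hA.image uS.injective.injOn).mono hsub

/-! ### The transfinite construction -/

/-- The chosen dominating family. -/
noncomputable def DD : Set (ℕ → ℕ) := Classical.choose dNum_spec

lemma DD_dom : IsDominating DD := (Classical.choose_spec dNum_spec).1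

lemma DD_card : dNum = #DD := (Classical.choose_spec dNum_spec).2

/-- Index type: the canonical well-order of order type `ord 𝔡`. -/
abbrev Idx : Type := (Cardinal.ord dNum).ToType

lemma mk_Idx : #Idx = dNum := by
  rw [Cardinal.mk_toType, Cardinal.card_ord]

noncomputable def eqv : Idx ≃ ↥DD :=
  Classical.choice (Cardinal.eq.mp (by rw [mk_Idx, DD_card]))

/-- The tests derived from the dominating family, made monotone and above the diagonal. -/
noncomputable def ee (i : Idx) : ℕ → ℕ := incrMaj ((eqv i : ℕ → ℕ))

lemma ee_dominates (a : ℕ → ℕ) : ∃ i : Idx, ∀ᶠ n in atTop, a n ≤ ee i n := by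
  obtain ⟨d, hd, hev⟩ := DD_dom a
  refine ⟨eqv.symm ⟨d, hd⟩, ?_⟩
  have hval : ((eqv (eqv.symm ⟨d, hd⟩) : ↥DD) : ℕ → ℕ) = d := by
    rw [Equiv.apply_symm_apply]
  refine hev.mono (fun n hn => ?_)
  calc a n ≤ d n := hn
    _ ≤ incrMaj d n := le_incrMaj d n
    _ = ee (eqv.symm ⟨d, hd⟩) n := by rw [ee, hval]

/-- The canonical monotone upper bound for the enumerations of `x` and `xᶜ`. -/
noncomputable def canonF (x : Set ℕ) : ℕ → ℕ :=
  incrMaj (fun n => max (enum x n) (enum xᶜ n))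

lemma enum_le_canonF (x : Set ℕ) (n : ℕ) : enum x n ≤ canonF x n := by
  unfold canonF
  exact le_trans (le_max_left _ _) (le_incrMaj (fun n => max (enum x n) (enum xᶜ n)) n)

/-- The family of tests available at stage `i`, given the previously constructed sets. -/
noncomputable def FF (i : Idx) (IH : ∀ j : Idx, j < i → Set ℕ) : Set (ℕ → ℕ) :=
  ee '' {j | j ≤ i} ∪ Set.range (fun j : {j : Idx // j < i} => canonF (IH j.1 j.2))

lemma seg_card_lt (i : Idx) : #(Set.Iio i) < dNum := Cardinal.mk_Iio_ord_toType i

lemma FF_card (i : Idx) (IH : ∀ j : Idx, j < i → Set ℕ) : #(FF i IH) < dNum := by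
  have hseg := seg_card_lt i
  have hIic : ({j : Idx | j ≤ i}) = insert i {j : Idx | j < i} :=
    (Set.Iio_insert (a := i)).symm
  have hIio : #({j : Idx | j < i}) = #{j : Idx // j < i} := rfl
  have h1 : #(ee '' {j : Idx | j ≤ i}) ≤ #({j : Idx | j ≤ i}) := Cardinal.mk_image_le
  have h2 : #({j : Idx | j ≤ i}) ≤ #({j : Idx | j < i}) + 1 := by
    rw [hIic]; exact Cardinal.mk_insert_le
  have h3 : #(Set.range (fun j : {j : Idx // j < i} => canonF (IH j.1 j.2))) ≤
      #{j : Idx // j < i} := Cardinal.mk_range_le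
  have hone : (1 : Cardinal) < dNum := lt_trans Cardinal.one_lt_aleph0 aleph0_lt_dNum
  have hIio_lt : #({j : Idx | j < i}) < dNum := by rw [hIio]; exact hseg
  have hA : #(ee '' {j : Idx | j ≤ i}) < dNum :=
    lt_of_le_of_lt (le_trans h1 h2) (Cardinal.add_lt_of_lt aleph0_lt_dNum.le hIio_lt hone)
  have hB : #(Set.range (fun j : {j : Idx // j < i} => canonF (IH j.1 j.2))) < dNum :=
    lt_of_le_of_lt h3 hseg
  exact lt_of_le_of_lt (Cardinal.mk_union_le _ _)
    (Cardinal.add_lt_of_lt aleph0_lt_dNum.le hA hB)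

lemma FF_nice (i : Idx) (IH : ∀ j : Idx, j < i → Set ℕ) :
    ∀ g ∈ FF i IH, Monotone g ∧ ∀ n, n ≤ g n := by
  rintro g (⟨j, hj, rfl⟩ | ⟨j, rfl⟩)
  · exact incrMaj_nice _
  · exact incrMaj_nice _

/-- The transfinite construction. -/
noncomputable def wfIdx : WellFounded ((· < ·) : Idx → Idx → Prop) :=
  (inferInstance : WellFoundedLT Idx).wf

noncomputable def xx (hdr : dNum ≤ rNum) : Idx → Set ℕ :=
  wfIdx.fix
    (fun i IH => Classical.choose (stage hdr (FF i IH) (FF_card i IH) (FF_nice i IH)))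

lemma xx_spec (hdr : dNum ≤ rNum) (i : Idx) :
    (xx hdr i).Infinite ∧ (xx hdr i)ᶜ.Infinite ∧
      ∀ g ∈ FF i (fun j _ => xx hdr j),
        {n | g n < enum (xx hdr i) n}.Infinite ∧ {n | g n < enum (xx hdr i)ᶜ n}.Infinite := by
  have hfix := WellFounded.fix_eq wfIdx
    (fun i IH => Classical.choose (stage hdr (FF i IH) (FF_card i IH) (FF_nice i IH))) i
  have hspec := Classical.choose_spec
    (stage hdr (FF i (fun j _ => xx hdr j)) (FF_card i _) (FF_nice i _))
  rw [xx, hfix]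
  exact hspec

lemma xx_inf (hdr : dNum ≤ rNum) (i : Idx) : (xx hdr i).Infinite := (xx_spec hdr i).1

lemma xx_coinf (hdr : dNum ≤ rNum) (i : Idx) : (xx hdr i)ᶜ.Infinite := (xx_spec hdr i).2.1

lemma xx_escape (hdr : dNum ≤ rNum) {i j : Idx} (hji : j ≤ i) :
    {n | ee j n < enum (xx hdr i) n}.Infinite ∧
      {n | ee j n < enum (xx hdr i)ᶜ n}.Infinite :=
  (xx_spec hdr i).2.2 (ee j) (Or.inl ⟨j, hji, rfl⟩)

lemma xx_escape_canon (hdr : dNum ≤ rNum) {i j : Idx} (hji : j < i) :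
    {n | canonF (xx hdr j) n < enum (xx hdr i) n}.Infinite :=
  ((xx_spec hdr i).2.2 (canonF (xx hdr j)) (Or.inr ⟨⟨j, hji⟩, rfl⟩)).1

lemma xx_ne (hdr : dNum ≤ rNum) {i j : Idx} (hji : j < i) : xx hdr i ≠ xx hdr j := by
  intro heq
  obtain ⟨n, hn⟩ := (xx_escape_canon hdr hji).nonempty
  simp only [Set.mem_setOf_eq] at hn
  have h1 : enum (xx hdr j) n ≤ canonF (xx hdr j) n := enum_le_canonF _ n
  rw [heq] at hn
  omega

lemma xx_inj (hdr : dNum ≤ rNum) : Function.Injective (xx hdr) := by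
  intro i j hij
  by_contra hne
  rcases lt_or_gt_of_ne hne with h | h
  · exact xx_ne hdr h hij.symm
  · exact xx_ne hdr h hij

end Stmt9Aux

open Stmt9Aux

theorem stmt9 (h : dNum ≤ rNum) :
    ∃ X : Set (Set ℕ), (∀ x ∈ X, x.Infinite ∧ xᶜ.Infinite) ∧ #X = dNum ∧
      (∀ Y ⊆ X, (∃ b : Set ℕ, b.Infinite ∧ ∀ y ∈ Y, ∀ n, enum y n ≤ enum b n) → #Y < dNum) ∧
      (∀ Y ⊆ X, (∃ b : Set ℕ, b.Infinite ∧ ∀ y ∈ Y, ∀ n, enum yᶜ n ≤ enum b n) → #Y < dNum) := by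
  classical
  refine ⟨Set.range (xx h), ?_, ?_, ?_, ?_⟩
  · rintro x ⟨i, rfl⟩
    exact ⟨xx_inf h i, xx_coinf h i⟩
  · rw [Cardinal.mk_range_eq _ (xx_inj h), mk_Idx]
  · -- boundedness of subfamilies
    rintro Y hYX ⟨b, hbinf, hbd⟩
    obtain ⟨i₀, hi₀⟩ := ee_dominates (enum b)
    rw [Filter.eventually_atTop] at hi₀
    obtain ⟨N, hN⟩ := hi₀
    have hsub : Y ⊆ (xx h) '' {j : Idx | j < i₀} := by
      intro y hy
      obtain ⟨i, rfl⟩ := hYX hy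
      refine ⟨i, ?_, rfl⟩
      simp only [Set.mem_setOf_eq]
      by_contra hcon
      push_neg at hcon
      obtain ⟨n, hn, hngt⟩ := ((xx_escape h hcon).1).exists_gt N
      simp only [Set.mem_setOf_eq] at hn
      have h1 : enum (xx h i) n ≤ enum b n := hbd _ hy n
      have h2 : enum b n ≤ ee i₀ n := hN n (le_of_lt hngt)
      omega
    calc #Y ≤ #((xx h) '' {j : Idx | j < i₀}) := Cardinal.mk_le_mk_of_subset hsub
      _ ≤ #({j : Idx | j < i₀}) := Cardinal.mk_image_le
      _ < dNum := seg_card_lt i₀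
  · rintro Y hYX ⟨b, hbinf, hbd⟩
    obtain ⟨i₀, hi₀⟩ := ee_dominates (enum b)
    rw [Filter.eventually_atTop] at hi₀
    obtain ⟨N, hN⟩ := hi₀
    have hsub : Y ⊆ (xx h) '' {j : Idx | j < i₀} := by
      intro y hy
      obtain ⟨i, rfl⟩ := hYX hy
      refine ⟨i, ?_, rfl⟩
      simp only [Set.mem_setOf_eq]
      by_contra hcon
      push_neg at hcon
      obtain ⟨n, hn, hngt⟩ := ((xx_escape h hcon).2).exists_gt N
      simp only [Set.mem_setOf_eq] at hn
      have h1 : enum (xx h i)ᶜ n ≤ enum b n := hbd _ hy n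
      have h2 : enum b n ≤ ee i₀ n := hN n (le_of_lt hngt)
      omega
    calc #Y ≤ #((xx h) '' {j : Idx | j < i₀}) := Cardinal.mk_le_mk_of_subset hsub
      _ ≤ #({j : Idx | j < i₀}) := Cardinal.mk_image_le
      _ < dNum := seg_card_lt i₀
end

section
/- If there exists a bi-𝔡-unbounded set and 𝔡 is a regular cardinal, then 𝔡 ≤ 𝔯. More precisely: if X is a set of infinite co-infinite subsets of ℕ such that both X and {xᶜ : x ∈ X} are 𝔡-unbounded, then every family A ⊆ [ℕ]^∞ of cardinality < 𝔡 is reaped by some r ∈ X. -/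
open Set Cardinal Filter

lemma enum_mono {s t : Set ℕ} (hst : s ⊆ t) (hs : s.Infinite) (n : ℕ) :
    enum t n ≤ enum s n := by
  classical
  have hs' : (setOf (· ∈ s)).Infinite := hs
  have ht' : (setOf (· ∈ t)).Infinite := hs.mono hst
  set m := Nat.nth (· ∈ s) n with hm
  have hmem : m ∈ t := hst (Nat.nth_mem_of_infinite hs' n)
  have h1 : Nat.count (· ∈ s) m = n := Nat.count_nth_of_infinite hs' n
  have h2 : Nat.count (· ∈ s) m ≤ Nat.count (· ∈ t) m :=
    Nat.count_mono_left fun k _ hk => hst hk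
  have h3 : Nat.nth (· ∈ t) (Nat.count (· ∈ t) m) = m := Nat.nth_count hmem
  calc enum t n ≤ Nat.nth (· ∈ t) (Nat.count (· ∈ t) m) :=
        (Nat.nth_le_nth ht').2 (h1 ▸ h2)
    _ = m := h3

lemma aleph0_lt_dNum : ℵ₀ < dNum := by
  have hne : { c | ∃ D, IsDominating D ∧ c = #D }.Nonempty :=
    ⟨#(Set.univ : Set (ℕ → ℕ)), Set.univ,
      fun a => ⟨a, trivial, Eventually.of_forall fun n => le_rfl⟩, rfl⟩
  obtain ⟨D, hD, hEq⟩ : dNum ∈ _ := csInf_mem hne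
  rw [hEq]
  by_contra hle
  rw [not_lt] at hle
  have hcount : D.Countable := Cardinal.le_aleph0_iff_set_countable.1 hle
  obtain ⟨d0, hd0, -⟩ := hD 0
  obtain ⟨f, hf⟩ := hcount.exists_eq_range ⟨d0, hd0⟩
  set g : ℕ → ℕ := fun n => (Finset.range (n + 1)).sup (fun i => f i n) + 1 with hg
  obtain ⟨d, hd, hev⟩ := hD g
  rw [hf] at hd
  obtain ⟨i, rfl⟩ := hd
  obtain ⟨N, hN⟩ := eventually_atTop.1 hev
  have hni : i ≤ max i N := le_max_left _ _
  have h1 : g (max i N) ≤ f i (max i N) := hN _ (le_max_right _ _)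
  have h2 : f i (max i N) ≤ (Finset.range (max i N + 1)).sup (fun j => f j (max i N)) :=
    Finset.le_sup (f := fun j => f j (max i N)) (Finset.mem_range.2 (Nat.lt_succ_of_le hni))
  have h3 : g (max i N) = (Finset.range (max i N + 1)).sup (fun j => f j (max i N)) + 1 := rfl
  omega

theorem stmt10 (hreg : dNum.IsRegular)
    (X : Set (Set ℕ)) (hX : ∀ x ∈ X, x.Infinite ∧ xᶜ.Infinite) (hXcard : dNum ≤ #X)
    (hunb : ∀ Y ⊆ X, (∃ b : Set ℕ, b.Infinite ∧ ∀ y ∈ Y, ∀ n, enum y n ≤ enum b n) → #Y < dNum)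
    (hunbc : ∀ Y ⊆ X, (∃ b : Set ℕ, b.Infinite ∧ ∀ y ∈ Y, ∀ n, enum yᶜ n ≤ enum b n) → #Y < dNum) :
    dNum ≤ rNum ∧
    ∀ A : Set (Set ℕ), (∀ a ∈ A, a.Infinite) → #A < dNum → ∃ r ∈ X, Reaps r A := by
  have h0 : ℵ₀ < dNum := aleph0_lt_dNum
  have main : ∀ A : Set (Set ℕ), (∀ a ∈ A, a.Infinite) → #A < dNum → ∃ r ∈ X, Reaps r A := by
    intro A hAinf hAcard
    set B : Set (Set ℕ) :=
      ⋃ a ∈ A, {x ∈ X | ¬ ((a ∩ x).Infinite ∧ (a \ x).Infinite)} with hBdef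
    have hBcard : #B < dNum := by
      rw [hBdef, Cardinal.card_biUnion_lt_iff_forall_of_isRegular hreg hAcard]
      intro a ha
      have hainf : a.Infinite := hAinf a ha
      have hcov : {x ∈ X | ¬ ((a ∩ x).Infinite ∧ (a \ x).Infinite)} ⊆
          ⋃ m : ℕ, ({x ∈ X | a \ Set.Iio m ⊆ x} ∪ {x ∈ X | a \ Set.Iio m ⊆ xᶜ}) := by
        rintro x ⟨hxX, hbad⟩
        rw [not_and_or, Set.not_infinite, Set.not_infinite] at hbad
        rcases hbad with hfin | hfin
        · -- a ∩ x finite : a \ Iio m ⊆ xᶜ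
          obtain ⟨M, hM⟩ := hfin.bddAbove
          refine Set.mem_iUnion.2 ⟨M + 1, Or.inr ⟨hxX, ?_⟩⟩
          intro k hk
          intro hkx
          exact absurd (hM ⟨hk.1, hkx⟩) (by simpa using hk.2)
        · obtain ⟨M, hM⟩ := hfin.bddAbove
          refine Set.mem_iUnion.2 ⟨M + 1, Or.inl ⟨hxX, ?_⟩⟩
          intro k hk
          by_contra hkx
          exact absurd (hM ⟨hk.1, hkx⟩) (by simpa using hk.2)
      refine lt_of_le_of_lt (Cardinal.mk_le_mk_of_subset hcov) ?_
      rw [Cardinal.card_iUnion_lt_iff_forall_of_isRegular hreg (by simpa using h0)]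
      intro m
      have hbinf : (a \ Set.Iio m).Infinite := hainf.diff (Set.finite_Iio m)
      have h1 : #{x ∈ X | a \ Set.Iio m ⊆ x} < dNum := by
        refine hunb _ (fun y hy => hy.1) ⟨a \ Set.Iio m, hbinf, fun y hy n => ?_⟩
        exact enum_mono hy.2 hbinf n
      have h2 : #{x ∈ X | a \ Set.Iio m ⊆ xᶜ} < dNum := by
        refine hunbc _ (fun y hy => hy.1) ⟨a \ Set.Iio m, hbinf, fun y hy n => ?_⟩
        exact enum_mono hy.2 hbinf n
      exact lt_of_le_of_lt (Cardinal.mk_union_le _ _)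
        (Cardinal.add_lt_of_lt hreg.aleph0_le h1 h2)
    have hnot : ¬ X ⊆ B := by
      intro hsub
      exact absurd (le_trans hXcard (Cardinal.mk_le_mk_of_subset hsub)) (not_le.2 hBcard)
    obtain ⟨x, hxX, hxB⟩ := Set.not_subset.1 hnot
    refine ⟨x, hxX, fun a ha => ?_⟩
    by_contra hbad
    exact hxB (Set.mem_biUnion ha ⟨hxX, hbad⟩)
  refine ⟨?_, main⟩
  -- dNum ≤ rNum
  have hne : { c | ∃ A : Set (Set ℕ), (∀ a ∈ A, a.Infinite) ∧
      (¬ ∃ r : Set ℕ, r.Infinite ∧ Reaps r A) ∧ c = #A }.Nonempty := by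
    refine ⟨#{a : Set ℕ | a.Infinite}, {a | a.Infinite}, fun a ha => ha, ?_, rfl⟩
    rintro ⟨r, hr, hre⟩
    have := (hre r hr).2
    rw [Set.diff_self] at this
    exact this Set.finite_empty
  obtain ⟨A, hAinf, hno, hEq⟩ : rNum ∈ _ := csInf_mem hne
  by_contra hlt
  rw [not_le] at hlt
  obtain ⟨r, hrX, hre⟩ := main A hAinf (hEq ▸ hlt)
  exact hno ⟨r, (hX r hrX).1, hre⟩
end

section
/- (Productive Two Worlds Lemma) Let X ⊆ [ℕ]^∞, Y a topological space, and Ψ : (X ∪ Fin) × Y → [ℕ]^∞ an upper continuous function, where X ∪ Fin carries the subspace topology of the Cantor space 𝒫(ℕ). Then there is an upper continuous function Φ : Y → [ℕ]^∞ such that for all x ∈ X, y ∈ Y, and n ∈ ℕ: if Φ(y)(n) ≤ x(n), then Ψ(x,y)(n) ≤ Φ(y)(n). -/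
open Set Cardinal Filter Topology

/-- The subset of ℕ coded by a point of the Cantor space. -/
def toSet (f : ℕ → Bool) : Set ℕ := {n | f n = true}

/-- Number of `true`s below `m`. -/
def cnt (z : ℕ → Bool) (m : ℕ) : ℕ := ((Finset.range m).filter (fun i => z i = true)).card

lemma cnt_succ (z : ℕ → Bool) (m : ℕ) :
    cnt z (m + 1) = cnt z m + (if z m = true then 1 else 0) := by
  unfold cnt
  rw [Finset.range_add_one, Finset.filter_insert]
  split
  · rw [Finset.card_insert_of_notMem (by simp [Finset.mem_filter])]
  · simp

lemma cnt_mono (z : ℕ → Bool) : Monotone (cnt z) := by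
  apply monotone_nat_of_le_succ
  intro m
  rw [cnt_succ]
  omega

lemma cnt_continuous (m : ℕ) : Continuous fun z : ℕ → Bool => cnt z m := by
  induction m with
  | zero => simpa [cnt] using continuous_const
  | succ m ih =>
    simp only [cnt_succ]
    exact ih.add ((continuous_of_discreteTopology
      (f := fun b : Bool => if b = true then 1 else 0)).comp (continuous_apply m))

lemma Kn_compact (n : ℕ) : IsCompact {z : ℕ → Bool | ∀ m, cnt z m ≤ n} := by
  have hcl : IsClosed {z : ℕ → Bool | ∀ m, cnt z m ≤ n} := by
    have : {z : ℕ → Bool | ∀ m, cnt z m ≤ n} = ⋂ m, {z : ℕ → Bool | cnt z m ≤ n} := by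
      ext z; simp
    rw [this]
    exact isClosed_iInter fun m =>
      (isClosed_discrete (Set.Iic n)).preimage (cnt_continuous m)
  exact hcl.isCompact

lemma Kn_finite {n : ℕ} {z : ℕ → Bool} (hz : z ∈ {z : ℕ → Bool | ∀ m, cnt z m ≤ n}) :
    (toSet z).Finite := by
  by_contra hinf
  replace hinf : (toSet z).Infinite := hinf
  obtain ⟨F, hFsub, hFcard⟩ := hinf.exists_subset_card_eq (n + 1)
  have hF : F ⊆ (Finset.range ((F.sup id) + 1)).filter (fun i => z i = true) := by
    intro i hi
    simp only [Finset.mem_filter, Finset.mem_range]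
    exact ⟨Nat.lt_succ_of_le (Finset.le_sup (f := id) hi), hFsub hi⟩
  have h1 := Finset.card_le_card hF
  have h2 : n + 1 ≤ cnt z ((F.sup id) + 1) := by rw [← hFcard]; exact h1
  have h3 := hz ((F.sup id) + 1)
  replace h3 : cnt z ((F.sup id) + 1) ≤ n := h3
  omega

lemma trunc_mem_Kn {n m : ℕ} (z : ℕ → Bool) (h : cnt z m ≤ n) :
    (fun i => if i < m then z i else false) ∈ {z : ℕ → Bool | ∀ m, cnt z m ≤ n} := by
  intro m'
  refine le_trans (Finset.card_le_card ?_) h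
  intro i hi
  simp only [Finset.mem_filter, Finset.mem_range] at hi ⊢
  rcases hi with ⟨_, hi2⟩
  split at hi2
  · exact ⟨by omega, hi2⟩
  · simp at hi2

lemma cnt_le_of_le_nth {x : ℕ → Bool} (hinf : (toSet x).Infinite) {n m : ℕ}
    (hm : m ≤ Nat.nth (· ∈ toSet x) n) : cnt x m ≤ n := by
  classical
  set p : ℕ → Prop := (· ∈ toSet x) with hp
  have hinf' : (setOf p).Infinite := hinf
  have hcard : ((Finset.range m).filter (fun i => x i = true)).card ≤ (Finset.range n).card := by
    apply Finset.card_le_card_of_injOn (Nat.count p)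
    · intro i hi
      simp only [Finset.coe_filter, Finset.mem_filter, Set.mem_setOf_eq, Finset.mem_range] at hi
      have hpi : p i := hi.2
      have hlt : i < Nat.nth p n := lt_of_lt_of_le hi.1 hm
      have : Nat.nth p (Nat.count p i) < Nat.nth p n := by
        rwa [Nat.nth_count hpi]
      simp only [Finset.mem_coe, Finset.mem_range]
      exact (Nat.nth_lt_nth hinf').mp this
    · intro i hi j hj hij
      simp only [Finset.coe_filter, Set.mem_setOf_eq, Finset.mem_range] at hi hj
      have : Nat.nth p (Nat.count p i) = Nat.nth p (Nat.count p j) := by rw [hij]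
      rwa [Nat.nth_count hi.2, Nat.nth_count hj.2] at this
  simpa [cnt] using hcard

lemma key_cover {X : Set (ℕ → Bool)} {Y : Type*} [TopologicalSpace Y]
    (Ψ : ↥(X ∪ {f | (toSet f).Finite}) × Y → ℕ → ℕ)
    (hΨuc : ∀ n m : ℕ, IsOpen {z | Ψ z n ≤ m}) (y : Y) (n : ℕ) :
    ∃ m : ℕ, y ∈ interior {y' | ∀ z : ↥(X ∪ {f | (toSet f).Finite}),
      cnt (↑z) m ≤ n → Ψ (z, y') n ≤ m} := by
  set K : Set (ℕ → Bool) := {z : ℕ → Bool | ∀ m, cnt z m ≤ n} with hK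
  have step : ∀ t : ↥K, ∃ (s : ℕ) (V : Set Y) (M : ℕ), IsOpen V ∧ y ∈ V ∧
      ∀ z : ↥(X ∪ {f | (toSet f).Finite}), (∀ i < s, (z : ℕ → Bool) i = (t : ℕ → Bool) i) →
        ∀ y' ∈ V, Ψ (z, y') n ≤ M := by
    rintro ⟨t, ht⟩
    have htmem : t ∈ X ∪ {f | (toSet f).Finite} := Set.mem_union_right _ (Kn_finite ht)
    set M := Ψ ((⟨t, htmem⟩ : ↥(X ∪ {f | (toSet f).Finite})), y) n with hM
    have hnhds : {w : ↥(X ∪ {f | (toSet f).Finite}) × Y | Ψ w n ≤ M} ∈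
        𝓝 ((⟨t, htmem⟩ : ↥(X ∪ {f | (toSet f).Finite})), y) :=
      (hΨuc n M).mem_nhds (by simp [hM])
    rw [mem_nhds_prod_iff] at hnhds
    obtain ⟨U, hU, V, hV, hUV⟩ := hnhds
    rw [nhds_subtype, mem_comap] at hU
    obtain ⟨W, hW, hWU⟩ := hU
    rw [nhds_pi, Filter.mem_pi] at hW
    obtain ⟨I, hIfin, u, hu, hIu⟩ := hW
    have hui : ∀ i, t i ∈ u i := fun i => mem_of_mem_nhds (hu i)
    obtain ⟨b, hb⟩ := hIfin.bddAbove
    obtain ⟨V', hV'sub, hV'open, hyV'⟩ := mem_nhds_iff.mp hV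
    refine ⟨b + 1, V', M, hV'open, hyV', ?_⟩
    intro z hz y' hy'
    refine hUV (Set.mk_mem_prod ?_ (hV'sub hy'))
    apply hWU
    have : (z : ℕ → Bool) ∈ I.pi (fun i => u i) := by
      intro i hi
      have : i < b + 1 := Nat.lt_succ_of_le (hb hi)
      rw [hz i this]
      exact hui i
    exact hIu this
  choose s V M hVopen hyV hprop using step
  set U : ↥K → Set (ℕ → Bool) := fun t => {g | ∀ i < s t, g i = (t : ℕ → Bool) i} with hU
  have hUopen : ∀ t, IsOpen (U t) := by
    intro t
    have : U t = ⋂ i ∈ Set.Iio (s t), (fun g : ℕ → Bool => g i) ⁻¹' {(t : ℕ → Bool) i} := by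
      ext g; simp [hU, Set.mem_iInter]
    rw [this]
    exact (Set.finite_Iio _).isOpen_biInter fun i _ =>
      (isOpen_discrete _).preimage (continuous_apply i)
  have hcover : K ⊆ ⋃ t : ↥K, U t := fun g hg =>
    Set.mem_iUnion.mpr ⟨⟨g, hg⟩, fun i _ => rfl⟩
  obtain ⟨F, hF⟩ := (Kn_compact n).elim_finite_subcover U hUopen hcover
  set m := F.sup (fun t => max (s t) (M t)) with hm
  refine ⟨m, ?_⟩
  have hVopen' : IsOpen (⋂ t ∈ F, V t) := isOpen_biInter_finset fun t _ => hVopen t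
  have hyV' : y ∈ ⋂ t ∈ F, V t := Set.mem_biInter fun t _ => hyV t
  refine interior_maximal ?_ hVopen' hyV'
  intro y' hy' z hz
  have htrK : (fun i => if i < m then (z : ℕ → Bool) i else false) ∈ K := trunc_mem_Kn _ hz
  obtain ⟨t, htF, htU⟩ := Set.mem_iUnion₂.mp (hF htrK)
  have hsm : s t ≤ m := le_trans (le_max_left _ _) (Finset.le_sup (f := fun t => max (s t) (M t)) htF)
  have hMm : M t ≤ m := le_trans (le_max_right _ _) (Finset.le_sup (f := fun t => max (s t) (M t)) htF)
  have hagree : ∀ i < s t, (z : ℕ → Bool) i = (t : ℕ → Bool) i := by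
    intro i hi
    have h1 : (if i < m then (z : ℕ → Bool) i else false) = (t : ℕ → Bool) i := htU i hi
    rwa [if_pos (lt_of_lt_of_le hi hsm)] at h1
  exact le_trans (hprop t z hagree y' (Set.mem_iInter₂.mp hy' t htF)) hMm

theorem stmt14 (X : Set (ℕ → Bool)) (hX : ∀ f ∈ X, (toSet f).Infinite)
    (Y : Type*) [TopologicalSpace Y]
    (Ψ : ↥(X ∪ {f | (toSet f).Finite}) × Y → ℕ → ℕ)
    (hΨmono : ∀ z, StrictMono (Ψ z))
    (hΨuc : ∀ n m : ℕ, IsOpen {z | Ψ z n ≤ m}) :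
    ∃ Φ : Y → ℕ → ℕ, (∀ y, StrictMono (Φ y)) ∧ (∀ n m : ℕ, IsOpen {y | Φ y n ≤ m}) ∧
      ∀ (x : ℕ → Bool) (hx : x ∈ X) (y : Y) (n : ℕ),
        Φ y n ≤ enum (toSet x) n →
        Ψ (⟨x, Set.mem_union_left _ hx⟩, y) n ≤ Φ y n := by
  classical
  set S : ℕ → ℕ → Set Y := fun n m =>
    {y' | ∀ z : ↥(X ∪ {f | (toSet f).Finite}), cnt (↑z) m ≤ n → Ψ (z, y') n ≤ m} with hS
  set Q : ℕ → ℕ → Set Y := fun n m => interior (S n m) with hQ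
  have hSmono : ∀ n {m m'}, m ≤ m' → S n m ⊆ S n m' := by
    intro n m m' hmm y' hy' z hz
    exact le_trans (hy' z (le_trans (cnt_mono _ hmm) hz)) hmm
  have hQmono : ∀ n {m m'}, m ≤ m' → Q n m ⊆ Q n m' := fun n _ _ hmm =>
    interior_mono (hSmono n hmm)
  have H : ∀ y n, ∃ m, y ∈ Q n m := fun y n => key_cover Ψ hΨuc y n
  set g : Y → ℕ → ℕ := fun y n => Nat.find (H y n) with hg
  have hgQ : ∀ y n m, g y n ≤ m ↔ y ∈ Q n m := by
    intro y n m
    constructor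
    · intro h
      exact hQmono n h (Nat.find_spec (H y n))
    · intro h
      exact Nat.find_le h
  set Φ : Y → ℕ → ℕ := fun y n => n + (Finset.range (n + 1)).sup (g y) with hΦ
  have hΦle : ∀ y n m, Φ y n ≤ m ↔ n ≤ m ∧ ∀ k ≤ n, y ∈ Q k (m - n) := by
    intro y n m
    constructor
    · intro h
      simp only [hΦ] at h
      have hn : n ≤ m := le_trans (Nat.le_add_right _ _) h
      refine ⟨hn, fun k hk => ?_⟩
      have h1 : g y k ≤ (Finset.range (n + 1)).sup (g y) :=
        Finset.le_sup (Finset.mem_range.mpr (Nat.lt_succ_of_le hk))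
      have h2 : g y k ≤ m - n := by omega
      exact (hgQ y k _).mp h2
    · rintro ⟨hn, hall⟩
      have : (Finset.range (n + 1)).sup (g y) ≤ m - n := by
        apply Finset.sup_le
        intro k hk
        exact (hgQ y k _).mpr (hall k (Nat.lt_succ_iff.mp (Finset.mem_range.mp hk)))
      simp only [hΦ]
      omega
  refine ⟨Φ, ?_, ?_, ?_⟩
  · intro y
    apply strictMono_nat_of_lt_succ
    intro n
    have : (Finset.range (n + 1)).sup (g y) ≤ (Finset.range (n + 1 + 1)).sup (g y) :=
      Finset.sup_mono (Finset.range_subset_range.mpr (by omega))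
    simp only [hΦ]
    omega
  · intro n m
    have : {y | Φ y n ≤ m} = if n ≤ m then ⋂ k ∈ Finset.range (n + 1), Q k (m - n) else ∅ := by
      ext y
      split
      · next h =>
        simp only [Set.mem_setOf_eq, hΦle, Set.mem_iInter, Finset.mem_range, Nat.lt_succ_iff]
        tauto
      · next h =>
        simp only [Set.mem_setOf_eq, hΦle, Set.mem_empty_iff_false, iff_false]
        tauto
    rw [this]
    split
    · exact isOpen_biInter_finset fun k _ => isOpen_interior
    · exact isOpen_empty
  · intro x hx y n hle
    have hgn : g y n ≤ Φ y n := by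
      have h1 : g y n ≤ (Finset.range (n + 1)).sup (g y) :=
        Finset.le_sup (Finset.mem_range.mpr (Nat.lt_succ_self n))
      simp only [hΦ]
      omega
    have hyQ : y ∈ Q n (Φ y n) := (hgQ y n _).mp hgn
    have hyS : y ∈ S n (Φ y n) := interior_subset hyQ
    apply hyS ⟨x, Set.mem_union_left _ hx⟩
    exact cnt_le_of_le_nth (hX x hx) hle
end

section
/- Let F be a filter on ℕ (a semifilter closed under finite intersections). There exists a cofinal F-scale if and only if 𝔟(F) = 𝔟(F⁺). -/
open Set Cardinal Filter

/-- A semifilter: a nonempty family of infinite subsets of ℕ closed under almost-supersets. -/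
def IsSemifilter (S : Set (Set ℕ)) : Prop :=
  S.Nonempty ∧ (∀ s ∈ S, s.Infinite) ∧
    ∀ s ∈ S, ∀ b : Set ℕ, b.Infinite → (s \ b).Finite → b ∈ S

/-- \`a ≤_S b\`: the set \`[a ≤ b]\` of agreement of the enumerations belongs to \`S\`. -/
def leS (S : Set (Set ℕ)) (a b : Set ℕ) : Prop := {n | enum a n ≤ enum b n} ∈ S

/-- \`S⁺\`, the dual semifilter. -/
def splus (S : Set (Set ℕ)) : Set (Set ℕ) := {a | a.Infinite ∧ aᶜ ∉ S}

/-- \`𝔟(S)\`: the least cardinality of a \`≤_S\`-unbounded family in \`[ℕ]^∞\`. -/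
noncomputable def bofS (S : Set (Set ℕ)) : Cardinal :=
  sInf { c | ∃ X : Set (Set ℕ), (∀ x ∈ X, x.Infinite) ∧
    (¬ ∃ b : Set ℕ, b.Infinite ∧ ∀ x ∈ X, leS S x b) ∧ c = #X }

/-- An \`S\`-scale. -/
def IsScale (S X : Set (Set ℕ)) : Prop :=
  (∀ x ∈ X, x.Infinite) ∧ bofS S ≤ #X ∧
  ∀ b : Set ℕ, b.Infinite → ∃ c : Set ℕ, c.Infinite ∧ leS (splus S) b c ∧
    #{x ∈ X | ¬ leS S c x} < bofS S

/-- A cofinal \`S\`-scale. -/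
def IsCofinalScale (S X : Set (Set ℕ)) : Prop :=
  (∀ x ∈ X, x.Infinite) ∧ bofS S ≤ #X ∧
  ∀ b : Set ℕ, b.Infinite → #{x ∈ X | ¬ leS S b x} < bofS S

/-- A filter: a semifilter closed under finite intersections. -/
def IsSetFilter (F : Set (Set ℕ)) : Prop :=
  IsSemifilter F ∧ ∀ a ∈ F, ∀ b ∈ F, a ∩ b ∈ F

-- ==================== enum basics ====================

lemma setOf_mem (a : Set ℕ) : {x | x ∈ a} = a := rfl

lemma enum_strictMono {a : Set ℕ} (ha : a.Infinite) : StrictMono (enum a) :=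
  Nat.nth_strictMono (by rwa [setOf_mem])

lemma enum_mem {a : Set ℕ} (ha : a.Infinite) (n : ℕ) : enum a n ∈ a :=
  Nat.nth_mem_of_infinite (by rwa [setOf_mem]) n

lemma enum_le_of_subset {a c : Set ℕ} (ha : a.Infinite) (hc : c.Infinite)
    (hac : a ⊆ c) (n : ℕ) : enum c n ≤ enum a n := by
  classical
  have ha' : {x | x ∈ a}.Infinite := by rwa [setOf_mem]
  have hc' : {x | x ∈ c}.Infinite := by rwa [setOf_mem]
  have hx : enum a n ∈ c := hac (enum_mem ha n)
  have h1 : n ≤ Nat.count (· ∈ c) (enum a n) := by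
    have h0 := Nat.count_mono_left (p := (· ∈ a)) (q := (· ∈ c)) (n := enum a n) (fun k _ hk => hac hk)
    have h2 : Nat.count (· ∈ a) (enum a n) = n := Nat.count_nth_of_infinite ha' n
    omega
  calc enum c n ≤ Nat.nth (· ∈ c) (Nat.count (· ∈ c) (enum a n)) :=
        Nat.nth_monotone hc' h1
    _ = enum a n := Nat.nth_count hx

/-- a strictly faster growing set -/
lemma exists_faster {b : Set ℕ} (hb : b.Infinite) :
    ∃ x : Set ℕ, x.Infinite ∧ ∀ n, enum b n < enum x n := by
  have hs : StrictMono (fun n => enum b (n + 1)) :=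
    fun m n h => (enum_strictMono hb) (by omega)
  refine ⟨Set.range (fun n => enum b (n + 1)), Set.infinite_range_of_injective hs.injective, ?_⟩
  intro n
  rw [enum_range hs]
  exact enum_strictMono hb (Nat.lt_succ_self n)

-- ==================== filter basics ====================

section FilterBasics
variable {F : Set (Set ℕ)} (hF : IsSetFilter F)
include hF

lemma mem_infinite {s : Set ℕ} (hs : s ∈ F) : s.Infinite := hF.1.2.1 s hs

lemma superset_mem {s b : Set ℕ} (hs : s ∈ F) (hsb : s ⊆ b) : b ∈ F :=
  hF.1.2.2 s hs b ((mem_infinite hF hs).mono hsb) (by simp [Set.diff_eq_empty.2 hsb])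

lemma univ_mem : (Set.univ : Set ℕ) ∈ F := by
  obtain ⟨s, hs⟩ := hF.1.1
  exact superset_mem hF hs (Set.subset_univ s)

lemma cofinite_mem {b : Set ℕ} (hb : bᶜ.Finite) : b ∈ F := by
  obtain ⟨s, hs⟩ := hF.1.1
  exact hF.1.2.2 s hs b (by simpa using hb.infinite_compl) (hb.subset (fun x hx => hx.2))

lemma empty_not_mem : (∅ : Set ℕ) ∉ F := fun h => (mem_infinite hF h) (Set.finite_empty)

lemma leS_trans {a b c : Set ℕ} (h1 : leS F a b) (h2 : leS F b c) : leS F a c := by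
  have := hF.2 _ h1 _ h2
  exact superset_mem hF this (fun n hn => Set.mem_setOf_eq ▸ le_trans hn.1 hn.2)

lemma leS_of_forall {a b : Set ℕ} (h : ∀ n, enum a n ≤ enum b n) : leS F a b := by
  have : {n | enum a n ≤ enum b n} = Set.univ := Set.eq_univ_of_forall h
  rw [leS, this]; exact univ_mem hF

lemma F_subset_splus : F ⊆ splus F := by
  intro a ha
  refine ⟨mem_infinite hF ha, fun hc => ?_⟩
  have := hF.2 a ha aᶜ hc
  rw [Set.inter_compl_self] at this
  exact empty_not_mem hF this

lemma leS_splus_of_leS {a b : Set ℕ} (h : leS F a b) : leS (splus F) a b :=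
  F_subset_splus hF h

/-- duality: `¬(y ≤_{F⁺} b)` implies `b ≤_F y`. -/
lemma leS_of_not_leS_splus {y b : Set ℕ} (h : ¬ leS (splus F) y b) : leS F b y := by
  have hcompl : {n | enum y n ≤ enum b n}ᶜ = {n | enum b n < enum y n} := by
    ext n; simp [not_le]
  have hsub : {n | enum b n < enum y n} ⊆ {n | enum b n ≤ enum y n} :=
    fun n hn => Set.mem_setOf_eq ▸ le_of_lt hn
  rw [leS, splus, Set.mem_setOf_eq, not_and_or] at h
  rcases h with h | h
  · -- the set {y ≤ b} is finite, so its complement is cofinite and in F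
    rw [Set.not_infinite] at h
    have : {n | enum b n < enum y n} ∈ F := by
      apply cofinite_mem hF
      rw [← hcompl, compl_compl]; exact h
    exact superset_mem hF this hsub
  · rw [not_not, hcompl] at h
    exact superset_mem hF h hsub

end FilterBasics

-- ==================== bofS basics ====================

lemma unbounded_univ {S : Set (Set ℕ)} (hS : (∅ : Set ℕ) ∉ S) :
    ¬ ∃ b : Set ℕ, b.Infinite ∧ ∀ x ∈ {a : Set ℕ | a.Infinite}, leS S x b := by
  rintro ⟨b, hb, hall⟩
  obtain ⟨x, hx, hfast⟩ := exists_faster hb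
  have := hall x hx
  have hempty : {n | enum x n ≤ enum b n} = ∅ := by
    ext n; simp only [Set.mem_setOf_eq, Set.mem_empty_iff_false, iff_false, not_le]
    exact hfast n
  rw [leS, hempty] at this
  exact hS this

lemma mk_infinite_mem_bset {S : Set (Set ℕ)} (hS : (∅ : Set ℕ) ∉ S) :
    #{a : Set ℕ | a.Infinite} ∈ { c | ∃ X : Set (Set ℕ), (∀ x ∈ X, x.Infinite) ∧
      (¬ ∃ b : Set ℕ, b.Infinite ∧ ∀ x ∈ X, leS S x b) ∧ c = #X } :=
  ⟨{a : Set ℕ | a.Infinite}, fun x hx => hx, unbounded_univ hS, rfl⟩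

lemma bofS_le_of_unbounded {S : Set (Set ℕ)} {X : Set (Set ℕ)}
    (h1 : ∀ x ∈ X, x.Infinite) (h2 : ¬ ∃ b : Set ℕ, b.Infinite ∧ ∀ x ∈ X, leS S x b) :
    bofS S ≤ #X :=
  csInf_le' ⟨X, h1, h2, rfl⟩

lemma bounded_of_lt_bofS {S : Set (Set ℕ)} {X : Set (Set ℕ)}
    (h1 : ∀ x ∈ X, x.Infinite) (h2 : #X < bofS S) :
    ∃ b : Set ℕ, b.Infinite ∧ ∀ x ∈ X, leS S x b := by
  by_contra h
  exact absurd (bofS_le_of_unbounded h1 h) (not_le.2 h2)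

lemma exists_unbounded_bofS {S : Set (Set ℕ)} (hS : (∅ : Set ℕ) ∉ S) :
    ∃ X : Set (Set ℕ), (∀ x ∈ X, x.Infinite) ∧
      (¬ ∃ b : Set ℕ, b.Infinite ∧ ∀ x ∈ X, leS S x b) ∧ bofS S = #X :=
  csInf_mem (s := { c | ∃ X : Set (Set ℕ), (∀ x ∈ X, x.Infinite) ∧
      (¬ ∃ b : Set ℕ, b.Infinite ∧ ∀ x ∈ X, leS S x b) ∧ c = #X })
    ⟨_, mk_infinite_mem_bset hS⟩

lemma bofS_le_mk_set {S : Set (Set ℕ)} (hS : (∅ : Set ℕ) ∉ S) :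
    bofS S ≤ #(Set ℕ) :=
  (csInf_le' (mk_infinite_mem_bset hS)).trans (mk_set_le _)

section FilterB
variable {F : Set (Set ℕ)} (hF : IsSetFilter F)
include hF

lemma finite_bounded {X : Set (Set ℕ)} (hfin : X.Finite) (hinf : ∀ x ∈ X, x.Infinite) :
    ∃ b : Set ℕ, b.Infinite ∧ ∀ x ∈ X, leS F x b := by
  classical
  set g : ℕ → ℕ := fun n => (hfin.toFinset.sup fun x => enum x n) + n with hg
  have hmono : StrictMono g := by
    intro m n hmn
    have : (hfin.toFinset.sup fun x => enum x m) ≤ hfin.toFinset.sup fun x => enum x n := by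
      apply Finset.sup_mono_fun
      intro x hx
      exact (enum_strictMono (hinf x (hfin.mem_toFinset.1 hx))).monotone hmn.le
    simp only [hg]; omega
  refine ⟨Set.range g, Set.infinite_range_of_injective hmono.injective, ?_⟩
  intro x hx
  apply leS_of_forall hF
  intro n
  rw [enum_range hmono]
  have : enum x n ≤ hfin.toFinset.sup fun x => enum x n :=
    Finset.le_sup (f := fun x => enum x n) (hfin.mem_toFinset.2 hx)
  simp only [hg]; omega

lemma aleph0_le_bofS : ℵ₀ ≤ bofS F := by
  by_contra h
  rw [not_le] at h
  obtain ⟨X, h1, h2, h3⟩ := exists_unbounded_bofS (S := F) (empty_not_mem hF)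
  rw [h3] at h
  exact h2 (finite_bounded hF (Cardinal.lt_aleph0_iff_set_finite.1 h) h1)

lemma bofS_le_bofS_splus : bofS F ≤ bofS (splus F) := by
  apply le_csInf ⟨_, mk_infinite_mem_bset (fun h => h.1 Set.finite_empty)⟩
  rintro c ⟨X, h1, h2, h3⟩
  refine csInf_le' ⟨X, h1, fun ⟨b, hb, hall⟩ => h2 ⟨b, hb, fun x hx => leS_splus_of_leS hF (hall x hx)⟩, h3⟩

end FilterB

-- ==================== many infinite subsets ====================

lemma mem_usum_even {a b : Set ℕ} {k : ℕ} : 2 * k ∈ usum a b ↔ k ∈ a := by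
  simp only [usum, Set.mem_union, Set.mem_image]
  constructor
  · rintro (⟨j, hj, hjk⟩ | ⟨j, hj, hjk⟩)
    · have : j = k := by omega
      rwa [← this]
    · omega
  · exact fun h => Or.inl ⟨k, h, rfl⟩

lemma usum_infinite {a : Set ℕ} : (usum a aᶜ).Infinite := by
  rcases a.finite_or_infinite with h | h
  · have : ((fun k => 2 * k + 1) '' aᶜ).Infinite :=
      (h.infinite_compl).image (fun x _ y _ hxy => by omega)
    exact this.mono Set.subset_union_right
  · have : ((fun k => 2 * k) '' a).Infinite :=
      h.image (fun x _ y _ hxy => by omega)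
    exact this.mono Set.subset_union_left

lemma mk_set_le_infinite_subsets {c : Set ℕ} (hc : c.Infinite) :
    #(Set ℕ) ≤ #{x : Set ℕ | x ⊆ c ∧ x.Infinite} := by
  have hinj : Function.Injective (enum c) := (enum_strictMono hc).injective
  refine Cardinal.mk_le_of_injective (f := fun s =>
    ⟨enum c '' (usum s sᶜ), ?_, ?_⟩) ?_
  · rintro y ⟨n, _, rfl⟩; exact enum_mem hc n
  · exact usum_infinite.image (hinj.injOn)
  · intro s t hst
    have h1 : enum c '' (usum s sᶜ) = enum c '' (usum t tᶜ) := congrArg Subtype.val hst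
    have h2 : usum s sᶜ = usum t tᶜ := hinj.image_injective h1
    ext k
    rw [← mem_usum_even (b := sᶜ), h2, mem_usum_even]

lemma exists_new_infinite_subset {c : Set ℕ} (hc : c.Infinite) {R : Set (Set ℕ)}
    (hR : #R < #(Set ℕ)) : ∃ x : Set ℕ, x ⊆ c ∧ x.Infinite ∧ x ∉ R := by
  by_contra h
  push_neg at h
  have hsub : {x : Set ℕ | x ⊆ c ∧ x.Infinite} ⊆ R := fun x hx => h x hx.1 hx.2
  exact absurd ((mk_set_le_infinite_subsets hc).trans (Cardinal.mk_le_mk_of_subset hsub))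
    (not_le.2 hR)

-- ==================== recursion step ====================

lemma rec_step {T : Type} [LinearOrder T] {F : Set (Set ℕ)} (hF : IsSetFilter F)
    (b : T → Set ℕ) (hb : ∀ i, (b i).Infinite)
    (hcard : ∀ i : T, #(Set.Iio i) < bofS F)
    (i : T) (g : ∀ j, j < i → Set ℕ) :
    ∃ x : Set ℕ, x.Infinite ∧ (∀ j hj, (g j hj).Infinite → leS F (g j hj) x) ∧
      leS F (b i) x ∧ ∀ j hj, x ≠ g j hj := by
  set prev : Set (Set ℕ) := Set.range (fun p : Set.Iio i => g p.1 p.2) with hprev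
  have hprevcard : #prev < bofS F :=
    lt_of_le_of_lt (Cardinal.mk_range_le) (hcard i)
  set prevI : Set (Set ℕ) := {y ∈ prev | y.Infinite} with hprevI
  set Xfam : Set (Set ℕ) := insert (b i) prevI with hXfam
  have hXcard : #Xfam < bofS F := by
    refine lt_of_le_of_lt (Cardinal.mk_insert_le) ?_
    refine Cardinal.add_lt_of_lt (aleph0_le_bofS hF) ?_ ?_
    · exact lt_of_le_of_lt (Cardinal.mk_le_mk_of_subset (fun y hy => hy.1)) hprevcard
    · exact lt_of_lt_of_le Cardinal.one_lt_aleph0 (aleph0_le_bofS hF)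
  have hXinf : ∀ x ∈ Xfam, x.Infinite := by
    rintro x (rfl | hx)
    · exact hb i
    · exact hx.2
  obtain ⟨c₀, hc₀, hbound⟩ := bounded_of_lt_bofS hXinf hXcard
  obtain ⟨x, hxc, hxinf, hxnew⟩ := exists_new_infinite_subset hc₀
    (hprevcard.trans_le (bofS_le_mk_set (empty_not_mem hF)))
  have hc₀x : leS F c₀ x := leS_of_forall hF (enum_le_of_subset hxinf hc₀ hxc)
  refine ⟨x, hxinf, ?_, ?_, ?_⟩
  · intro j hj hginf
    have : g j hj ∈ Xfam := Or.inr ⟨⟨⟨j, hj⟩, rfl⟩, hginf⟩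
    exact leS_trans hF (hbound _ this) hc₀x
  · exact leS_trans hF (hbound _ (Or.inl rfl)) hc₀x
  · intro j hj heq
    exact hxnew (heq ▸ Set.mem_range_self (⟨j, hj⟩ : Set.Iio i))

lemma exists_rec {T : Type} [LinearOrder T] [WellFoundedLT T] {F : Set (Set ℕ)}
    (hF : IsSetFilter F) (b : T → Set ℕ) (hb : ∀ i, (b i).Infinite)
    (hcard : ∀ i : T, #(Set.Iio i) < bofS F) :
    ∃ f : T → Set ℕ, ∀ i, (f i).Infinite ∧
      (∀ j, j < i → leS F (f j) (f i) ∧ f i ≠ f j) ∧ leS F (b i) (f i) := by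
  have wf : WellFounded ((· < ·) : T → T → Prop) := wellFounded_lt
  set f : T → Set ℕ := WellFounded.fix wf
    (fun i rec => (rec_step hF b hb hcard i rec).choose) with hf
  have hfix : ∀ i, f i = (rec_step hF b hb hcard i (fun j _ => f j)).choose :=
    fun i => WellFounded.fix_eq wf _ i
  have hInf : ∀ i, (f i).Infinite := by
    intro i
    rw [hfix i]
    exact (rec_step hF b hb hcard i (fun j _ => f j)).choose_spec.1
  refine ⟨f, fun i => ⟨hInf i, ?_, ?_⟩⟩
  · intro j hj
    have hs := (rec_step hF b hb hcard i (fun j _ => f j)).choose_spec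
    constructor
    · have := hs.2.1 j hj (hInf j)
      rwa [← hfix i] at this
    · have := hs.2.2.2 j hj
      rwa [← hfix i] at this
  · have hs := (rec_step hF b hb hcard i (fun j _ => f j)).choose_spec
    have := hs.2.2.1
    rwa [← hfix i] at this

-- ==================== forward direction ====================

lemma forward_dir {F X : Set (Set ℕ)} (hF : IsSetFilter F) (hX : IsCofinalScale F X) :
    bofS F = bofS (splus F) := by
  refine le_antisymm (bofS_le_bofS_splus hF) ?_
  obtain ⟨Y, hYX, hYcard⟩ := Cardinal.le_mk_iff_exists_subset.1 hX.2.1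
  rw [← hYcard]
  apply bofS_le_of_unbounded (fun y hy => hX.1 y (hYX hy))
  rintro ⟨b, hb, hall⟩
  obtain ⟨b', hb', hfast⟩ := exists_faster hb
  have hbad : #{x ∈ X | ¬ leS F b' x} < bofS F := hX.2.2 b' hb'
  have hexy : ∃ y ∈ Y, leS F b' y := by
    by_contra h
    push_neg at h
    have hsub : Y ⊆ {x ∈ X | ¬ leS F b' x} := fun y hy => ⟨hYX hy, h y hy⟩
    exact absurd ((Cardinal.mk_le_mk_of_subset hsub).trans_lt hbad)
      (by rw [hYcard]; exact lt_irrefl _)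
  obtain ⟨y, hyY, hy⟩ := hexy
  have h1 : {n | enum b n < enum y n} ∈ F := by
    refine superset_mem hF hy ?_
    intro n hn
    exact lt_of_lt_of_le (hfast n) hn
  have h2 := hall y hyY
  rw [leS, splus, Set.mem_setOf_eq] at h2
  apply h2.2
  have : {n | enum y n ≤ enum b n}ᶜ = {n | enum b n < enum y n} := by
    ext n; simp [not_le]
  rwa [this]

-- ==================== backward direction ====================

lemma backward_dir {F : Set (Set ℕ)} (hF : IsSetFilter F)
    (heq : bofS F = bofS (splus F)) : ∃ X : Set (Set ℕ), IsCofinalScale F X := by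
  have hsp : (∅ : Set ℕ) ∉ splus F := fun h => h.1 Set.finite_empty
  obtain ⟨X₀, hX₀inf, hX₀unb, hX₀card⟩ := exists_unbounded_bofS hsp
  set κ := bofS F with hκ
  set T := κ.ord.ToType with hT
  have hmkT : #T = κ := by rw [hT, Cardinal.mk_toType, Cardinal.card_ord]
  have hmkX₀ : #↥X₀ = κ := by rw [← hX₀card, heq]
  obtain ⟨e⟩ : Nonempty (T ≃ ↥X₀) := Cardinal.eq.1 (hmkT.trans hmkX₀.symm)
  set b : T → Set ℕ := fun i => (e i : Set ℕ) with hb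
  have hbinf : ∀ i, (b i).Infinite := fun i => hX₀inf _ (e i).2
  have hcard : ∀ i : T, #(Set.Iio i) < bofS F := fun i => Cardinal.mk_Iio_ord_toType i
  obtain ⟨f, hf⟩ := exists_rec hF b hbinf hcard
  have hfinj : Function.Injective f := by
    intro i j hij
    by_contra hne
    rcases lt_or_gt_of_ne hne with h | h
    · exact ((hf j).2.1 i h).2 hij.symm
    · exact ((hf i).2.1 j h).2 hij
  refine ⟨Set.range f, ?_, ?_, ?_⟩
  · rintro x ⟨i, rfl⟩
    exact (hf i).1
  · rw [Cardinal.mk_range_eq f hfinj, hmkT]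
  · intro b₀ hb₀
    have hex : ∃ y ∈ X₀, ¬ leS (splus F) y b₀ := by
      by_contra h
      push_neg at h
      exact hX₀unb ⟨b₀, hb₀, h⟩
    obtain ⟨y, hyX₀, hny⟩ := hex
    set i₀ : T := e.symm ⟨y, hyX₀⟩ with hi₀
    have hbi₀ : b i₀ = y := by rw [hb, hi₀]; simp
    have hb₀y : leS F b₀ y := leS_of_not_leS_splus hF hny
    have hb₀fi₀ : leS F b₀ (f i₀) :=
      leS_trans hF hb₀y (hbi₀ ▸ (hf i₀).2.2)
    have hsub : {x ∈ Set.range f | ¬ leS F b₀ x} ⊆ f '' (Set.Iic i₀) := by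
      rintro x ⟨⟨i, rfl⟩, hnot⟩
      rcases le_or_gt i i₀ with h | h
      · exact ⟨i, h, rfl⟩
      · exact absurd (leS_trans hF hb₀fi₀ ((hf i).2.1 i₀ h).1) hnot
    refine lt_of_le_of_lt (Cardinal.mk_le_mk_of_subset hsub) ?_
    refine lt_of_le_of_lt Cardinal.mk_image_le ?_
    rw [← Set.Iio_insert]
    refine lt_of_le_of_lt Cardinal.mk_insert_le ?_
    exact Cardinal.add_lt_of_lt (aleph0_le_bofS hF) (hcard i₀)
      (lt_of_lt_of_le Cardinal.one_lt_aleph0 (aleph0_le_bofS hF))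


theorem stmt15 (F : Set (Set ℕ)) (hF : IsSetFilter F) :
    (∃ X : Set (Set ℕ), IsCofinalScale F X) ↔ bofS F = bofS (splus F) := by
  exact ⟨fun ⟨X, hX⟩ => forward_dir hF hX, backward_dir hF⟩
end

section
/- Let S be a superfilter (a semifilter such that a ∪ b ∈ S implies a ∈ S or b ∈ S). A set X ⊆ [ℕ]^∞ is a cofinal S-scale if and only if it is an S-scale. -/
open Set Cardinal Filter

lemma mem_S_of_superset {S : Set (Set ℕ)} (hS : IsSemifilter S) {s t : Set ℕ}
    (hs : s ∈ S) (hst : s ⊆ t) : t ∈ S := by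
  obtain ⟨_, hinf, hcl⟩ := hS
  exact hcl s hs t ((hinf s hs).mono hst) (by simp [Set.diff_eq_empty.mpr hst])

lemma leS_trans_plus {S : Set (Set ℕ)} (hS : IsSemifilter S)
    (hsup : ∀ a b : Set ℕ, a ∪ b ∈ S → a ∈ S ∨ b ∈ S) {b c x : Set ℕ}
    (h1 : leS (splus S) b c) (h2 : leS S c x) : leS S b x := by
  have hsub : {n | enum c n ≤ enum x n} ⊆
      ({n | enum b n ≤ enum c n} ∩ {n | enum c n ≤ enum x n}) ∪ {n | enum b n ≤ enum c n}ᶜ := by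
    intro n hn
    by_cases h : enum b n ≤ enum c n
    · exact Or.inl ⟨h, hn⟩
    · exact Or.inr h
  have hAB : {n | enum b n ≤ enum c n} ∩ {n | enum c n ≤ enum x n} ∈ S := by
    rcases hsup _ _ (mem_S_of_superset hS h2 hsub) with h | h
    · exact h
    · exact absurd h h1.2
  refine mem_S_of_superset hS hAB (fun n hn => ?_)
  exact Set.mem_setOf_eq ▸ le_trans hn.1 hn.2

theorem stmt17 (S : Set (Set ℕ)) (hS : IsSemifilter S)
    (hsup : ∀ a b : Set ℕ, a ∪ b ∈ S → a ∈ S ∨ b ∈ S) (X : Set (Set ℕ)) :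
    IsCofinalScale S X ↔ IsScale S X := by
  constructor
  · rintro ⟨h1, h2, h3⟩
    refine ⟨h1, h2, fun b hb => ⟨b, hb, ?_, h3 b hb⟩⟩
    have huniv : {n | enum b n ≤ enum b n} = Set.univ := by ext n; simp
    rw [leS, huniv]
    refine ⟨Set.infinite_univ, fun h => ?_⟩
    have := hS.2.1 _ h
    simp [Set.not_infinite] at this
  · rintro ⟨h1, h2, h3⟩
    refine ⟨h1, h2, fun b hb => ?_⟩
    obtain ⟨c, hc, hbc, hcard⟩ := h3 b hb
    have hsub : {x ∈ X | ¬ leS S b x} ⊆ {x ∈ X | ¬ leS S c x} := by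
      rintro x ⟨hx, hnb⟩
      exact ⟨hx, fun hcx => hnb (leS_trans_plus hS hsup hbc hcx)⟩
    exact lt_of_le_of_lt (Cardinal.mk_le_mk_of_subset hsub) hcard
end
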